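/- Let ς = (s_1,…,s_d) be a composition of 2N, let T ∈ CSYT^{(N,N)}_ς, and let φ be a Möbius transformation of the upper half-plane with φ(x_1) < ⋯ < φ(x_d) for a given x ∈ 𝔛_d. Then the fused conformal block function satisfies the covariance 𝓤_T(φ(x_1),…,φ(x_d)) = ∏_{i=1}^d φ'(x_i)^{−s_i²/4} · 𝓤_T(x_1,…,x_d). -/

import Mathlib

open scoped Classical
open MvPolynomial

noncomputable section

/-- `q k = 1 + s 1 + ⋯ + s (k-1)`. -/
def qIdx (s : ℕ → ℕ) (k : ℕ) : ℕ := 1 + ∑ j ∈ Finset.Ico 1 k, s j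

/-- Extension of a permutation of `Fin n` to the 1-based letters `{1, …, n} ⊆ ℕ`. -/
def extendPerm (n : ℕ) (σ : Equiv.Perm (Fin n)) : ℕ → ℕ :=
  fun i => if h : 1 ≤ i ∧ i ≤ n then ((σ ⟨i - 1, by omega⟩ : Fin n) : ℕ) + 1 else i

/-- Membership in the colored symmetric group `S_{s_1} × ⋯ × S_{s_d}`. -/
def InBlocks (n d : ℕ) (s : ℕ → ℕ) (σ : Equiv.Perm (Fin n)) : Prop :=
  ∀ i : Fin n, ∀ k ∈ Finset.Icc 1 d,
    (qIdx s k ≤ (i : ℕ) + 1 ∧ (i : ℕ) + 1 < qIdx s (k + 1)) →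
    (qIdx s k ≤ ((σ i : Fin n) : ℕ) + 1 ∧ ((σ i : Fin n) : ℕ) + 1 < qIdx s (k + 1))

/-- The action of the `ς`-antisymmetrizer `p_ς` on polynomials. -/
def pAct (n d : ℕ) (s : ℕ → ℕ) (f : MvPolynomial ℕ ℝ) : MvPolynomial ℕ ℝ :=
  (∏ k ∈ Finset.Icc 1 d, ((s k).factorial : ℝ))⁻¹ •
    ∑ σ ∈ Finset.univ.filter (InBlocks n d s),
      ((Equiv.Perm.sign σ : ℤ) : ℝ) • MvPolynomial.rename (extendPerm n σ) f

/-- The Specht polynomial of a numbering. -/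
def spechtPoly (cells : Finset (ℕ × ℕ)) (Nb : ℕ × ℕ → ℕ) : MvPolynomial ℕ ℝ :=
  ∏ p ∈ (cells ×ˢ cells).filter (fun p => p.1.2 = p.2.2 ∧ p.2.1 < p.1.1),
    (X (Nb p.1) - X (Nb p.2))

/-- Column-reading order on cells. -/
def colReadLT (c c' : ℕ × ℕ) : Prop :=
  c.2 < c'.2 ∨ (c.2 = c'.2 ∧ c.1 < c'.1)

/-- The standardization `F̃` of a filling `F`. -/
def stdize (s : ℕ → ℕ) (cells : Finset (ℕ × ℕ)) (F : ℕ × ℕ → ℕ) : ℕ × ℕ → ℕ :=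
  fun c => qIdx s (F c) + (cells.filter fun c' => colReadLT c' c ∧ F c' = F c).card

/-- `V_ς(x) = ∏_{k=1}^d ∏_{q_k ≤ i < j < q_{k+1}} (x_j - x_i)`. -/
def vandBlocks (d : ℕ) (s : ℕ → ℕ) : MvPolynomial ℕ ℝ :=
  ∏ k ∈ Finset.Icc 1 d,
    ∏ p ∈ ((Finset.Icc (qIdx s k) (qIdx s (k + 1) - 1)) ×ˢ
            (Finset.Icc (qIdx s k) (qIdx s (k + 1) - 1))).filter (fun p => p.1 < p.2),
      (X p.2 - X p.1)

/-- The exact quotient of `f` by `v`. -/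
def exactQuot (v f : MvPolynomial ℕ ℝ) : MvPolynomial ℕ ℝ :=
  if h : ∃ g, f = v * g then h.choose else 0

/-- The substitution collapsing each block of variables to a single variable. -/
def collapseVar (d : ℕ) (s : ℕ → ℕ) : ℕ → ℕ :=
  fun i => ∑ k ∈ (Finset.Icc 1 d).filter (fun k => qIdx s k ≤ i ∧ i < qIdx s (k + 1)), k

/-- The fused Specht polynomial `𝓕_F`. -/
def fusedSpecht (n d : ℕ) (s : ℕ → ℕ) (cells : Finset (ℕ × ℕ)) (F : ℕ × ℕ → ℕ) :
    MvPolynomial ℕ ℝ :=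
  MvPolynomial.rename (collapseVar d s)
    (exactQuot (vandBlocks d s) (pAct n d s (spechtPoly cells (stdize s cells F))))

/-- The cells of the Young diagram of shape `(N, N)`. -/
def cellsNN (N : ℕ) : Finset (ℕ × ℕ) := (Finset.range 2) ×ˢ (Finset.range N)

/-- The cells of the Young diagram of shape `(2^N)`. -/
def cellsCol (N : ℕ) : Finset (ℕ × ℕ) := (Finset.range N) ×ˢ (Finset.range 2)

/-- Column-strict fillings: weakly increasing along rows, strictly increasing down
columns. -/
def ColStrictFilling (cells : Finset (ℕ × ℕ)) (F : ℕ × ℕ → ℕ) : Prop :=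
  (∀ c ∈ cells, ∀ c' ∈ cells, c.1 = c'.1 → c.2 < c'.2 → F c ≤ F c') ∧
  (∀ c ∈ cells, ∀ c' ∈ cells, c.2 = c'.2 → c.1 < c'.1 → F c < F c')

/-- Content condition. -/
def HasContent (d : ℕ) (s : ℕ → ℕ) (cells : Finset (ℕ × ℕ)) (F : ℕ × ℕ → ℕ) : Prop :=
  ∀ k ∈ Finset.Icc 1 d, (cells.filter fun c => F c = k).card = s k

/-- Normalization off the diagram. -/
def ZeroOff (cells : Finset (ℕ × ℕ)) (F : ℕ × ℕ → ℕ) : Prop :=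
  ∀ c, c ∉ cells → F c = 0

/-- The set `CSYT^{(N,N)}_ς` of column-strict tableaux of shape `(N,N)` and content `ς`. -/
def CSYTsetNN (N d : ℕ) (s : ℕ → ℕ) : Set (ℕ × ℕ → ℕ) :=
  {T | ColStrictFilling (cellsNN N) T ∧ HasContent d s (cellsNN N) T ∧
    ZeroOff (cellsNN N) T}

/-- The transpose `T^t` of a filling of shape `(N,N)` (a filling of shape `(2^N)`). -/
def transposeFill (T : ℕ × ℕ → ℕ) : ℕ × ℕ → ℕ := fun c => T (c.2, c.1)

/-- Evaluation of a polynomial in the 1-based variables `x_1, …, x_m` at `x : Fin m → ℝ`. -/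
def evalAt (m : ℕ) (x : Fin m → ℝ) : MvPolynomial ℕ ℝ → ℝ :=
  MvPolynomial.eval fun k => if h : 1 ≤ k ∧ k ≤ m then x ⟨k - 1, by omega⟩ else 0

/-- The chamber `𝔛_m`. -/
def chamber (m : ℕ) : Set (Fin m → ℝ) := {x | StrictMono x}

/-- The fused conformal block function
`𝓤_T(x) = ∏_{1≤i<j≤d} (x_j - x_i)^{-s_i s_j/2} · 𝓕_{T^t}(x)`. -/
def Ublock (N d : ℕ) (s : ℕ → ℕ) (T : ℕ × ℕ → ℕ) (x : Fin d → ℝ) : ℝ :=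
  (∏ p ∈ Finset.univ.filter (fun p : Fin d × Fin d => p.1 < p.2),
      (x p.2 - x p.1) ^
        (-(((s ((p.1 : ℕ) + 1) * s ((p.2 : ℕ) + 1) : ℕ) : ℝ)) / 2)) *
    evalAt d x (fusedSpecht (2 * N) d s (cellsCol N) (transposeFill T))

namespace FusedCov

set_option linter.unusedSectionVars false

lemma sum_filter_product_mul {α β : Type*} (S : Finset α) (T : Finset β)
    (P : α × β → Prop) [DecidablePred P] (f : α → ℝ) (g : β → ℝ) :
    ∑ p ∈ (S ×ˢ T).filter P, f p.1 * g p.2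
      = ∑ i ∈ S, f i * ∑ j ∈ T.filter (fun j => P (i, j)), g j := by
  rw [Finset.sum_filter, Finset.sum_product]
  refine Finset.sum_congr rfl fun i _ => ?_
  rw [Finset.sum_filter, Finset.mul_sum]
  exact Finset.sum_congr rfl fun j _ => by by_cases h : P (i, j) <;> simp [h]

lemma sum_filter_product_mul' {α β : Type*} (S : Finset α) (T : Finset β)
    (P : α × β → Prop) [DecidablePred P] (f : α → ℝ) (g : β → ℝ) :
    ∑ p ∈ (S ×ˢ T).filter P, f p.1 * g p.2
      = ∑ j ∈ T, (∑ i ∈ S.filter (fun i => P (i, j)), f i) * g j := by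
  rw [Finset.sum_filter, Finset.sum_product, Finset.sum_comm]
  refine Finset.sum_congr rfl fun j _ => ?_
  rw [Finset.sum_filter, Finset.sum_mul]
  exact Finset.sum_congr rfl fun i _ => by by_cases h : P (i, j) <;> simp [h]

lemma prod_filter_product_fst {α β : Type*} (S : Finset α) (T : Finset β)
    (P : α × β → Prop) [DecidablePred P] (f : α → ℝ) :
    ∏ p ∈ (S ×ˢ T).filter P, f p.1
      = ∏ i ∈ S, f i ^ (T.filter (fun j => P (i, j))).card := by
  rw [Finset.prod_filter, Finset.prod_product]
  refine Finset.prod_congr rfl fun i _ => ?_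
  rw [← Finset.prod_const, Finset.prod_filter]

lemma prod_filter_product_snd {α β : Type*} (S : Finset α) (T : Finset β)
    (P : α × β → Prop) [DecidablePred P] (f : β → ℝ) :
    ∏ p ∈ (S ×ˢ T).filter P, f p.2
      = ∏ j ∈ T, f j ^ (S.filter (fun i => P (i, j))).card := by
  rw [Finset.prod_filter, Finset.prod_product, Finset.prod_comm]
  refine Finset.prod_congr rfl fun j _ => ?_
  rw [← Finset.prod_const, Finset.prod_filter]

lemma card_filter_product {α β : Type*} (S : Finset α) (T : Finset β)
    (P : α × β → Prop) [DecidablePred P] :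
    ((S ×ˢ T).filter P).card = ∑ i ∈ S, (T.filter (fun j => P (i, j))).card := by
  rw [Finset.card_filter, Finset.sum_product]
  exact Finset.sum_congr rfl fun i _ => (Finset.card_filter _ _).symm

lemma card_filter_product' {α β : Type*} (S : Finset α) (T : Finset β)
    (P : α × β → Prop) [DecidablePred P] :
    ((S ×ˢ T).filter P).card = ∑ j ∈ T, (S.filter (fun i => P (i, j))).card := by
  rw [Finset.card_filter, Finset.sum_product, Finset.sum_comm]
  exact Finset.sum_congr rfl fun j _ => (Finset.card_filter _ _).symm

section LO
variable {α : Type*} [LinearOrder α]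

lemma filter_union_filter_eq_erase (S : Finset α) {i : α} (hi : i ∈ S) :
    S.filter (fun j => i < j) ∪ S.filter (fun j => j < i) = S.erase i := by
  ext j
  simp only [Finset.mem_union, Finset.mem_filter, Finset.mem_erase]
  constructor
  · rintro (⟨h1, h2⟩ | ⟨h1, h2⟩)
    · exact ⟨ne_of_gt h2, h1⟩
    · exact ⟨ne_of_lt h2, h1⟩
  · rintro ⟨h1, h2⟩
    rcases lt_or_gt_of_ne h1 with h | h
    · exact Or.inr ⟨h2, h⟩
    · exact Or.inl ⟨h2, h⟩

lemma filter_disjoint_lt (S : Finset α) (i : α) :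
    Disjoint (S.filter (fun j => i < j)) (S.filter (fun j => j < i)) := by
  rw [Finset.disjoint_left]
  rintro j hj hj'
  rw [Finset.mem_filter] at hj hj'
  exact absurd (hj.2.trans hj'.2) (lt_irrefl _)

lemma filter_lt_card_add (S : Finset α) {i : α} (hi : i ∈ S) :
    (S.filter (fun j => i < j)).card + (S.filter (fun j => j < i)).card = S.card - 1 := by
  rw [← Finset.card_union_of_disjoint (filter_disjoint_lt S i),
    filter_union_filter_eq_erase S hi, Finset.card_erase_of_mem hi]

lemma filter_lt_sum_add (S : Finset α) {i : α} (hi : i ∈ S) (h : α → ℝ) :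
    (∑ j ∈ S.filter (fun j => i < j), h j) + (∑ j ∈ S.filter (fun j => j < i), h j)
      = (∑ j ∈ S, h j) - h i := by
  rw [← Finset.sum_union (filter_disjoint_lt S i), filter_union_filter_eq_erase S hi,
    Finset.sum_erase_eq_sub hi]

/-- product over ordered pairs of `f p.1 * f p.2`. -/
lemma prod_pairs_mul (S : Finset α) (f : α → ℝ) :
    ∏ p ∈ (S ×ˢ S).filter (fun p => p.1 < p.2), (f p.1 * f p.2)
      = ∏ i ∈ S, f i ^ (S.card - 1) := by
  rw [Finset.prod_mul_distrib]
  have e1 : ∏ p ∈ (S ×ˢ S).filter (fun p => p.1 < p.2), f p.1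
      = ∏ i ∈ S, f i ^ (S.filter (fun j => i < j)).card :=
    prod_filter_product_fst S S _ f
  have e2 : ∏ p ∈ (S ×ˢ S).filter (fun p => p.1 < p.2), f p.2
      = ∏ j ∈ S, f j ^ (S.filter (fun i => i < j)).card :=
    prod_filter_product_snd S S _ f
  rw [e1, e2, ← Finset.prod_mul_distrib]
  exact Finset.prod_congr rfl fun i hi => by rw [← pow_add, filter_lt_card_add S hi]

lemma two_mul_card_pairs (S : Finset α) :
    2 * ((S ×ˢ S).filter (fun p => p.1 < p.2)).card = S.card * (S.card - 1) := by
  have h1 : ((S ×ˢ S).filter (fun p => p.1 < p.2)).card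
      = ∑ i ∈ S, (S.filter (fun j => i < j)).card := card_filter_product S S _
  have h2 : ((S ×ˢ S).filter (fun p => p.1 < p.2)).card
      = ∑ i ∈ S, (S.filter (fun j => j < i)).card := card_filter_product' S S _
  have : 2 * ((S ×ˢ S).filter (fun p => p.1 < p.2)).card
      = ∑ i ∈ S, ((S.filter (fun j => i < j)).card + (S.filter (fun j => j < i)).card) := by
    rw [Finset.sum_add_distrib, ← h1, ← h2]; ring
  rw [this, Finset.sum_congr rfl (fun i hi => filter_lt_card_add S hi), Finset.sum_const,
    smul_eq_mul]

lemma sum_pairs_weight (S : Finset α) (w g : α → ℝ) :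
    ∑ p ∈ (S ×ˢ S).filter (fun p => p.1 < p.2), w p.1 * w p.2 * (g p.1 + g p.2)
      = ∑ i ∈ S, w i * g i * ((∑ j ∈ S, w j) - w i) := by
  have split : ∀ p : α × α, w p.1 * w p.2 * (g p.1 + g p.2)
      = (w p.1 * g p.1) * w p.2 + w p.1 * (w p.2 * g p.2) := fun p => by ring
  rw [Finset.sum_congr rfl (fun p _ => split p), Finset.sum_add_distrib]
  have e1 : ∑ p ∈ (S ×ˢ S).filter (fun p => p.1 < p.2), (w p.1 * g p.1) * w p.2
      = ∑ i ∈ S, (w i * g i) * ∑ j ∈ S.filter (fun j => i < j), w j :=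
    sum_filter_product_mul S S _ (fun i => w i * g i) w
  have e2 : ∑ p ∈ (S ×ˢ S).filter (fun p => p.1 < p.2), w p.1 * (w p.2 * g p.2)
      = ∑ j ∈ S, (∑ i ∈ S.filter (fun i => i < j), w i) * (w j * g j) :=
    sum_filter_product_mul' S S _ w (fun j => w j * g j)
  rw [e1, e2]
  have e3 : ∀ j ∈ S, (∑ i ∈ S.filter (fun i => i < j), w i) * (w j * g j)
      = (w j * g j) * ∑ i ∈ S.filter (fun i => i < j), w i := fun j _ => by ring
  rw [Finset.sum_congr rfl e3, ← Finset.sum_add_distrib]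
  refine Finset.sum_congr rfl fun i hi => ?_
  rw [← mul_add, filter_lt_sum_add S hi w]

lemma two_mul_sum_pairs_w (S : Finset α) (w : α → ℝ) :
    2 * ∑ p ∈ (S ×ˢ S).filter (fun p => p.1 < p.2), w p.1 * w p.2
      = (∑ i ∈ S, w i) ^ 2 - ∑ i ∈ S, w i ^ 2 := by
  have e1 : ∑ p ∈ (S ×ˢ S).filter (fun p => p.1 < p.2), w p.1 * w p.2
      = ∑ i ∈ S, w i * ∑ j ∈ S.filter (fun j => i < j), w j :=
    sum_filter_product_mul S S _ w w
  have e2 : ∑ p ∈ (S ×ˢ S).filter (fun p => p.1 < p.2), w p.1 * w p.2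
      = ∑ j ∈ S, (∑ i ∈ S.filter (fun i => i < j), w i) * w j :=
    sum_filter_product_mul' S S _ w w
  have key : 2 * ∑ p ∈ (S ×ˢ S).filter (fun p => p.1 < p.2), w p.1 * w p.2
      = ∑ i ∈ S, w i * ((∑ j ∈ S, w j) - w i) := by
    calc 2 * ∑ p ∈ (S ×ˢ S).filter (fun p => p.1 < p.2), w p.1 * w p.2
        = (∑ i ∈ S, w i * ∑ j ∈ S.filter (fun j => i < j), w j)
          + ∑ j ∈ S, (∑ i ∈ S.filter (fun i => i < j), w i) * w j := by
          rw [← e1, ← e2]; ring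
      _ = ∑ i ∈ S, (w i * ∑ j ∈ S.filter (fun j => i < j), w j
            + w i * ∑ j ∈ S.filter (fun j => j < i), w j) := by
          rw [Finset.sum_add_distrib]
          congr 1
          exact Finset.sum_congr rfl fun j _ => by ring
      _ = ∑ i ∈ S, w i * ((∑ j ∈ S, w j) - w i) := by
          refine Finset.sum_congr rfl fun i hi => ?_
          rw [← mul_add, filter_lt_sum_add S hi w]
  rw [key, Finset.sum_congr rfl (fun i (_ : i ∈ S) =>
    (by ring : w i * ((∑ j ∈ S, w j) - w i) = w i * (∑ j ∈ S, w j) - w i ^ 2)),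
    Finset.sum_sub_distrib, ← Finset.sum_mul, sq]

end LO


section QFacts

lemma qIdx_one (s : ℕ → ℕ) : qIdx s 1 = 1 := by simp [qIdx]

lemma qIdx_mono (s : ℕ → ℕ) : Monotone (qIdx s) := fun k k' h => by
  unfold qIdx
  exact Nat.add_le_add_left (Finset.sum_le_sum_of_subset (Finset.Ico_subset_Ico le_rfl h)) 1

lemma qIdx_pos (s : ℕ → ℕ) (k : ℕ) : 1 ≤ qIdx s k := by unfold qIdx; omega

lemma qIdx_succ (s : ℕ → ℕ) {k : ℕ} (hk : 1 ≤ k) : qIdx s (k+1) = qIdx s k + s k := by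
  unfold qIdx
  rw [Finset.sum_Ico_succ_top hk]
  ring

lemma qIdx_top (s : ℕ → ℕ) (d N : ℕ) (hsum : ∑ k ∈ Finset.Icc 1 d, s k = 2*N) :
    qIdx s (d+1) = 1 + 2*N := by
  unfold qIdx
  rw [Finset.Ico_add_one_right_eq_Icc, hsum]

lemma block_card (s : ℕ → ℕ) {k : ℕ} (hk : 1 ≤ k) :
    (Finset.Icc (qIdx s k) (qIdx s (k+1) - 1)).card = s k := by
  rw [Nat.card_Icc, qIdx_succ s hk]
  have := qIdx_pos s k
  omega

lemma block_subset (s : ℕ → ℕ) (d N : ℕ) (hsum : ∑ k ∈ Finset.Icc 1 d, s k = 2*N)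
    {k i : ℕ} (hk : k ∈ Finset.Icc 1 d)
    (hi : i ∈ Finset.Icc (qIdx s k) (qIdx s (k+1) - 1)) : i ∈ Finset.Icc 1 (2*N) := by
  rw [Finset.mem_Icc] at hk hi ⊢
  have h1 := qIdx_pos s k
  have h2 : qIdx s (k+1) ≤ qIdx s (d+1) := qIdx_mono s (by omega)
  rw [qIdx_top s d N hsum] at h2
  omega

lemma blocks_partition (s : ℕ → ℕ) (d N : ℕ) (hd : 1 ≤ d)
    (hsum : ∑ k ∈ Finset.Icc 1 d, s k = 2*N) :
    Finset.Icc 1 (2*N) = (Finset.Icc 1 d).biUnion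
      (fun k => Finset.Icc (qIdx s k) (qIdx s (k+1) - 1)) := by
  ext i
  simp only [Finset.mem_biUnion]
  constructor
  · intro hi
    rw [Finset.mem_Icc] at hi
    have hne : ((Finset.Icc 1 d).filter (fun k => qIdx s k ≤ i)).Nonempty := by
      refine ⟨1, ?_⟩
      simp only [Finset.mem_filter, Finset.mem_Icc, qIdx_one]
      exact ⟨⟨le_rfl, hd⟩, hi.1⟩
    set k0 := Finset.max' _ hne with hk0
    have hk0mem := Finset.max'_mem _ hne
    rw [Finset.mem_filter, Finset.mem_Icc] at hk0mem
    refine ⟨k0, by rw [Finset.mem_Icc]; exact hk0mem.1, ?_⟩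
    rw [Finset.mem_Icc]
    refine ⟨hk0mem.2, ?_⟩
    have hlt : i < qIdx s (k0 + 1) := by
      by_cases hcase : k0 = d
      · have := qIdx_top s d N hsum
        rw [hcase, this]
        omega
      · by_contra hcon
        push_neg at hcon
        have hmem : k0 + 1 ∈ (Finset.Icc 1 d).filter (fun k => qIdx s k ≤ i) := by
          rw [Finset.mem_filter, Finset.mem_Icc]
          exact ⟨⟨by omega, by omega⟩, hcon⟩
        have := Finset.le_max' _ _ hmem
        omega
    omega
  · rintro ⟨k, hk, hik⟩
    exact block_subset s d N hsum hk hik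

lemma blocks_disjoint (s : ℕ → ℕ) (d : ℕ) :
    (↑(Finset.Icc 1 d) : Set ℕ).PairwiseDisjoint
      (fun k => Finset.Icc (qIdx s k) (qIdx s (k+1) - 1)) := by
  intro k hk k' hk' hne
  simp only [Function.onFun, Finset.disjoint_left]
  intro i hi hi'
  rw [Finset.mem_Icc] at hi hi'
  rcases lt_or_gt_of_ne hne with h | h
  · have h2 : qIdx s (k+1) ≤ qIdx s k' := qIdx_mono s (by omega)
    have := qIdx_pos s (k+1)
    omega
  · have h2 : qIdx s (k'+1) ≤ qIdx s k := qIdx_mono s (by omega)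
    have := qIdx_pos s (k'+1)
    omega

lemma collapseVar_eq (s : ℕ → ℕ) (d : ℕ) {k i : ℕ} (hk : k ∈ Finset.Icc 1 d)
    (h1 : qIdx s k ≤ i) (h2 : i < qIdx s (k+1)) : collapseVar d s i = k := by
  unfold collapseVar
  have hfil : (Finset.Icc 1 d).filter (fun k' => qIdx s k' ≤ i ∧ i < qIdx s (k'+1)) = {k} := by
    ext k'
    simp only [Finset.mem_filter, Finset.mem_singleton]
    constructor
    · rintro ⟨hk', hq1, hq2⟩
      by_contra hne
      rcases lt_or_gt_of_ne hne with h | h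
      · have : qIdx s (k'+1) ≤ qIdx s k := qIdx_mono s (by omega)
        omega
      · have : qIdx s (k+1) ≤ qIdx s k' := qIdx_mono s (by omega)
        omega
    · rintro rfl
      exact ⟨hk, h1, h2⟩
  rw [hfil, Finset.sum_singleton]

lemma collapseVar_out (s : ℕ → ℕ) (d N : ℕ) (hsum : ∑ k ∈ Finset.Icc 1 d, s k = 2*N)
    {i : ℕ} (hi : i ∉ Finset.Icc 1 (2*N)) : collapseVar d s i = 0 := by
  unfold collapseVar
  have hfil : (Finset.Icc 1 d).filter (fun k' => qIdx s k' ≤ i ∧ i < qIdx s (k'+1)) = ∅ := by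
    rw [Finset.filter_eq_empty_iff]
    rintro k hk ⟨hq1, hq2⟩
    refine hi (block_subset s d N hsum hk ?_)
    rw [Finset.mem_Icc]
    have := qIdx_pos s (k+1)
    omega
  rw [hfil, Finset.sum_empty]

end QFacts


section Cells

lemma mem_cellsCol {N : ℕ} {c : ℕ × ℕ} : c ∈ cellsCol N ↔ c.1 < N ∧ c.2 < 2 := by
  cases c
  simp [cellsCol, Finset.mem_product]

lemma cellsCol_card (N : ℕ) : (cellsCol N).card = 2*N := by
  simp [cellsCol]
  ring

lemma card_cells_lt (N : ℕ) (cl : ℕ × ℕ) (hcl : cl ∈ cellsCol N) :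
    ((cellsCol N).filter (fun b => cl.2 = b.2 ∧ b.1 < cl.1)).card = cl.1 := by
  rw [mem_cellsCol] at hcl
  have h1 : (cellsCol N).filter (fun b => cl.2 = b.2 ∧ b.1 < cl.1)
      = ((Finset.range N).filter (fun r => r < cl.1)) ×ˢ
        ((Finset.range 2).filter (fun j => cl.2 = j)) := by
    rw [cellsCol, ← Finset.filter_product]
    exact Finset.filter_congr (fun x _ => by tauto)
  rw [h1, Finset.card_product]
  have h2 : (Finset.range N).filter (fun r => r < cl.1) = Finset.range cl.1 := by
    ext r
    simp only [Finset.mem_filter, Finset.mem_range]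
    omega
  have h3 : (Finset.range 2).filter (fun j => cl.2 = j) = {cl.2} := by
    ext j
    simp only [Finset.mem_filter, Finset.mem_range, Finset.mem_singleton]
    omega
  rw [h2, h3]
  simp

lemma card_cells_gt (N : ℕ) (cl : ℕ × ℕ) (hcl : cl ∈ cellsCol N) :
    ((cellsCol N).filter (fun a => a.2 = cl.2 ∧ cl.1 < a.1)).card = N - 1 - cl.1 := by
  rw [mem_cellsCol] at hcl
  have h1 : (cellsCol N).filter (fun a => a.2 = cl.2 ∧ cl.1 < a.1)
      = ((Finset.range N).filter (fun r => cl.1 < r)) ×ˢ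
        ((Finset.range 2).filter (fun j => j = cl.2)) := by
    rw [cellsCol, ← Finset.filter_product]
    exact Finset.filter_congr (fun x _ => by tauto)
  rw [h1, Finset.card_product]
  have h2 : (Finset.range N).filter (fun r => cl.1 < r) = Finset.Ico (cl.1 + 1) N := by
    ext r
    simp only [Finset.mem_filter, Finset.mem_range, Finset.mem_Ico]
    omega
  have h3 : (Finset.range 2).filter (fun j => j = cl.2) = {cl.2} := by
    ext j
    simp only [Finset.mem_filter, Finset.mem_range, Finset.mem_singleton]
    omega
  rw [h2, h3, Nat.card_Ico]
  simp
  omega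

/-- The Specht pair set for the two-column shape. -/
lemma specht_pairs_card (N : ℕ) :
    (((cellsCol N) ×ˢ (cellsCol N)).filter
        (fun p => p.1.2 = p.2.2 ∧ p.2.1 < p.1.1)).card = N * (N-1) := by
  have h1 : (((cellsCol N) ×ˢ (cellsCol N)).filter
        (fun p => p.1.2 = p.2.2 ∧ p.2.1 < p.1.1)).card
      = ∑ a ∈ cellsCol N, ((cellsCol N).filter (fun b => a.2 = b.2 ∧ b.1 < a.1)).card :=
    card_filter_product _ _ _
  rw [h1, Finset.sum_congr rfl (fun a ha => card_cells_lt N a ha)]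
  rw [cellsCol, Finset.sum_product]
  have : ∀ x ∈ Finset.range N, ∑ _y ∈ Finset.range 2, x = 2 * x := by
    intro x _
    simp [Finset.sum_const, mul_comm]
  rw [Finset.sum_congr rfl this, ← Finset.mul_sum]
  have := Finset.sum_range_id_mul_two N
  omega

lemma prod_specht_pairs (N : ℕ) (f : ℕ × ℕ → ℝ) :
    ∏ p ∈ ((cellsCol N) ×ˢ (cellsCol N)).filter (fun p => p.1.2 = p.2.2 ∧ p.2.1 < p.1.1),
        (f p.1 * f p.2)
      = ∏ cl ∈ cellsCol N, f cl ^ (N - 1) := by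
  rw [Finset.prod_mul_distrib]
  have e1 : ∏ p ∈ ((cellsCol N) ×ˢ (cellsCol N)).filter
        (fun p => p.1.2 = p.2.2 ∧ p.2.1 < p.1.1), f p.1
      = ∏ a ∈ cellsCol N, f a ^ ((cellsCol N).filter (fun b => a.2 = b.2 ∧ b.1 < a.1)).card :=
    prod_filter_product_fst _ _ _ f
  have e2 : ∏ p ∈ ((cellsCol N) ×ˢ (cellsCol N)).filter
        (fun p => p.1.2 = p.2.2 ∧ p.2.1 < p.1.1), f p.2
      = ∏ b ∈ cellsCol N, f b ^ ((cellsCol N).filter (fun a => a.2 = b.2 ∧ b.1 < a.1)).card :=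
    prod_filter_product_snd _ _ _ f
  rw [e1, e2, ← Finset.prod_mul_distrib]
  refine Finset.prod_congr rfl fun cl hcl => ?_
  rw [← pow_add, card_cells_lt N cl hcl, card_cells_gt N cl hcl]
  congr 1
  rw [mem_cellsCol] at hcl
  omega

end Cells

section ColRead

lemma colReadLT_irrefl (c : ℕ × ℕ) : ¬ colReadLT c c := by
  unfold colReadLT
  omega

lemma colReadLT_trans {a b c : ℕ × ℕ} (h1 : colReadLT a b) (h2 : colReadLT b c) :
    colReadLT a c := by
  unfold colReadLT at *
  omega

lemma colReadLT_total {a b : ℕ × ℕ} (h : a ≠ b) : colReadLT a b ∨ colReadLT b a := by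
  unfold colReadLT
  by_contra hcon
  push_neg at hcon
  exact h (Prod.ext (by omega) (by omega))

end ColRead

section Stdize

variable (N d : ℕ) (s : ℕ → ℕ) (F : ℕ × ℕ → ℕ)

/-- membership of values, from the content condition. -/
lemma F_mem_range (hcont : ∀ k ∈ Finset.Icc 1 d, ((cellsCol N).filter (fun c => F c = k)).card = s k)
    (hcard : ∑ k ∈ Finset.Icc 1 d, s k = 2*N) :
    ∀ c ∈ cellsCol N, F c ∈ Finset.Icc 1 d := by
  have hbi : (cellsCol N).filter (fun c => F c ∈ Finset.Icc 1 d)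
      = (Finset.Icc 1 d).biUnion (fun k => (cellsCol N).filter (fun c => F c = k)) := by
    ext c
    simp only [Finset.mem_filter, Finset.mem_biUnion]
    constructor
    · rintro ⟨hc, hk⟩
      exact ⟨F c, hk, hc, rfl⟩
    · rintro ⟨k, hk, hc, rfl⟩
      exact ⟨hc, hk⟩
  have hdisj : ∀ k ∈ Finset.Icc 1 d, ∀ k' ∈ Finset.Icc 1 d, k ≠ k' →
      Disjoint ((cellsCol N).filter (fun c => F c = k)) ((cellsCol N).filter (fun c => F c = k')) := by
    intro k _ k' _ hne
    rw [Finset.disjoint_left]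
    rintro c hc hc'
    rw [Finset.mem_filter] at hc hc'
    exact hne (hc.2 ▸ hc'.2 ▸ rfl)
  have hcardG : ((cellsCol N).filter (fun c => F c ∈ Finset.Icc 1 d)).card = 2*N := by
    rw [hbi, Finset.card_biUnion hdisj, Finset.sum_congr rfl hcont, hcard]
  have hsub : (cellsCol N).filter (fun c => F c ∈ Finset.Icc 1 d) ⊆ cellsCol N :=
    Finset.filter_subset _ _
  have heq : (cellsCol N).filter (fun c => F c ∈ Finset.Icc 1 d) = cellsCol N := by
    apply Finset.eq_of_subset_of_card_le hsub
    rw [hcardG, cellsCol_card]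
  intro c hc
  rw [← heq] at hc
  exact (Finset.mem_filter.mp hc).2

lemma rank_le (hcont : ∀ k ∈ Finset.Icc 1 d, ((cellsCol N).filter (fun c => F c = k)).card = s k)
    (hcard : ∑ k ∈ Finset.Icc 1 d, s k = 2*N) {c : ℕ × ℕ} (hc : c ∈ cellsCol N) :
    ((cellsCol N).filter (fun c' => colReadLT c' c ∧ F c' = F c)).card + 1 ≤ s (F c) := by
  have hk := F_mem_range N d s F hcont hcard c hc
  have hsub : (cellsCol N).filter (fun c' => colReadLT c' c ∧ F c' = F c)
      ⊆ ((cellsCol N).filter (fun c' => F c' = F c)).erase c := by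
    intro c' hc'
    rw [Finset.mem_filter] at hc'
    rw [Finset.mem_erase, Finset.mem_filter]
    refine ⟨?_, hc'.1, hc'.2.2⟩
    rintro rfl
    exact colReadLT_irrefl c' hc'.2.1
  have hcmem : c ∈ (cellsCol N).filter (fun c' => F c' = F c) := by
    rw [Finset.mem_filter]; exact ⟨hc, rfl⟩
  have h1 := Finset.card_le_card hsub
  rw [Finset.card_erase_of_mem hcmem, hcont (F c) hk] at h1
  have h2 : 1 ≤ ((cellsCol N).filter (fun c' => F c' = F c)).card :=
    Finset.card_pos.mpr ⟨c, hcmem⟩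
  rw [hcont (F c) hk] at h2
  omega

lemma stdize_mem_block
    (hcont : ∀ k ∈ Finset.Icc 1 d, ((cellsCol N).filter (fun c => F c = k)).card = s k)
    (hcard : ∑ k ∈ Finset.Icc 1 d, s k = 2*N) {c : ℕ × ℕ} (hc : c ∈ cellsCol N) :
    qIdx s (F c) ≤ stdize s (cellsCol N) F c ∧
      stdize s (cellsCol N) F c < qIdx s (F c + 1) := by
  have hk := F_mem_range N d s F hcont hcard c hc
  rw [Finset.mem_Icc] at hk
  have hr := rank_le N d s F hcont hcard hc
  unfold stdize
  constructor
  · omega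
  · rw [qIdx_succ s hk.1]
    omega

lemma stdize_strictMono
    (hcont : ∀ k ∈ Finset.Icc 1 d, ((cellsCol N).filter (fun c => F c = k)).card = s k)
    {c c' : ℕ × ℕ} (hc : c ∈ cellsCol N) (hc' : c' ∈ cellsCol N)
    (hF : F c = F c') (hlt : colReadLT c c') :
    stdize s (cellsCol N) F c < stdize s (cellsCol N) F c' := by
  unfold stdize
  rw [hF]
  have hss : (cellsCol N).filter (fun c'' => colReadLT c'' c ∧ F c'' = F c')
      ⊂ (cellsCol N).filter (fun c'' => colReadLT c'' c' ∧ F c'' = F c') := by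
    constructor
    · intro c'' h
      rw [Finset.mem_filter] at h ⊢
      exact ⟨h.1, colReadLT_trans h.2.1 hlt, h.2.2⟩
    · intro hsub
      have : c ∈ (cellsCol N).filter (fun c'' => colReadLT c'' c' ∧ F c'' = F c') := by
        rw [Finset.mem_filter]
        exact ⟨hc, hlt, hF⟩
      have hcmem := hsub this
      rw [Finset.mem_filter] at hcmem
      exact colReadLT_irrefl c hcmem.2.1
  have := Finset.card_lt_card hss
  omega

lemma stdize_injOn
    (hcont : ∀ k ∈ Finset.Icc 1 d, ((cellsCol N).filter (fun c => F c = k)).card = s k)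
    (hcard : ∑ k ∈ Finset.Icc 1 d, s k = 2*N) :
    Set.InjOn (stdize s (cellsCol N) F) (cellsCol N) := by
  intro c hc c' hc' heq
  simp only [Finset.coe_mem, Finset.mem_coe] at hc hc'
  by_contra hne
  by_cases hF : F c = F c'
  · rcases colReadLT_total hne with h | h
    · exact absurd heq (Nat.ne_of_lt (stdize_strictMono N d s F hcont hc hc' hF h))
    · exact absurd heq.symm (Nat.ne_of_lt (stdize_strictMono N d s F hcont hc' hc hF.symm h))
  · have hb := stdize_mem_block N d s F hcont hcard hc
    have hb' := stdize_mem_block N d s F hcont hcard hc'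
    rcases lt_or_gt_of_ne hF with h | h
    · have : qIdx s (F c + 1) ≤ qIdx s (F c') := qIdx_mono s (by omega)
      omega
    · have : qIdx s (F c' + 1) ≤ qIdx s (F c) := qIdx_mono s (by omega)
      omega

lemma stdize_image
    (hcont : ∀ k ∈ Finset.Icc 1 d, ((cellsCol N).filter (fun c => F c = k)).card = s k)
    (hcard : ∑ k ∈ Finset.Icc 1 d, s k = 2*N) :
    (cellsCol N).image (stdize s (cellsCol N) F) = Finset.Icc 1 (2*N) := by
  apply Finset.eq_of_subset_of_card_le
  · intro i hi
    rw [Finset.mem_image] at hi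
    obtain ⟨c, hc, rfl⟩ := hi
    have hb := stdize_mem_block N d s F hcont hcard hc
    have hk := F_mem_range N d s F hcont hcard c hc
    refine block_subset s d N hcard hk ?_
    rw [Finset.mem_Icc]
    have := qIdx_pos s (F c + 1)
    omega
  · rw [Finset.card_image_of_injOn (stdize_injOn N d s F hcont hcard), Nat.card_Icc,
      cellsCol_card]
    omega

lemma prod_stdize_reindex
    (hcont : ∀ k ∈ Finset.Icc 1 d, ((cellsCol N).filter (fun c => F c = k)).card = s k)
    (hcard : ∑ k ∈ Finset.Icc 1 d, s k = 2*N) (g : ℕ → ℝ) :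
    ∏ cl ∈ cellsCol N, g (stdize s (cellsCol N) F cl) = ∏ i ∈ Finset.Icc 1 (2*N), g i := by
  rw [← stdize_image N d s F hcont hcard,
    Finset.prod_image (fun c hc c' hc' h => stdize_injOn N d s F hcont hcard hc hc' h)]

lemma stdize_mem_Icc
    (hcont : ∀ k ∈ Finset.Icc 1 d, ((cellsCol N).filter (fun c => F c = k)).card = s k)
    (hcard : ∑ k ∈ Finset.Icc 1 d, s k = 2*N) {c : ℕ × ℕ} (hc : c ∈ cellsCol N) :
    1 ≤ stdize s (cellsCol N) F c ∧ stdize s (cellsCol N) F c ≤ 2*N := by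
  have : stdize s (cellsCol N) F c ∈ Finset.Icc 1 (2*N) := by
    rw [← stdize_image N d s F hcont hcard]
    exact Finset.mem_image_of_mem _ hc
  rwa [Finset.mem_Icc] at this

end Stdize

section Transpose

/-- content is preserved under transposition. -/
lemma content_transpose (N : ℕ) (T : ℕ × ℕ → ℕ) (k : ℕ) :
    ((cellsCol N).filter (fun c => transposeFill T c = k)).card
      = ((cellsNN N).filter (fun c => T c = k)).card := by
  apply Finset.card_nbij' (fun c => (c.2, c.1)) (fun c => (c.2, c.1))
  · intro c hc
    simp only [Finset.mem_coe, Finset.mem_filter] at hc ⊢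
    obtain ⟨hc1, hc2⟩ := hc
    rw [mem_cellsCol] at hc1
    refine ⟨?_, hc2⟩
    simp only [cellsNN, Finset.mem_product, Finset.mem_range]
    exact ⟨hc1.2, hc1.1⟩
  · intro c hc
    simp only [Finset.mem_coe, Finset.mem_filter] at hc ⊢
    obtain ⟨hc1, hc2⟩ := hc
    simp only [cellsNN, Finset.mem_product, Finset.mem_range] at hc1
    refine ⟨?_, hc2⟩
    rw [mem_cellsCol]
    exact ⟨hc1.2, hc1.1⟩
  · intro c _
    rfl
  · intro c _
    rfl

end Transpose


section Mobius

/-- The Möbius map. -/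
def phi (a b c e t : ℝ) : ℝ := (a*t+b)/(c*t+e)

lemma phi_sub (a b c e u v : ℝ) (hu : c*u+e ≠ 0) (hv : c*v+e ≠ 0) :
    phi a b c e u - phi a b c e v = ((a*e-b*c)*(u-v))/((c*u+e)*(c*v+e)) := by
  unfold phi
  rw [div_sub_div _ _ hu hv]
  congr 1
  ring

/-- transformation of a block Vandermonde. -/
lemma blockV (a b c e : ℝ) (S : Finset ℕ) (u : ℕ → ℝ) (hu : ∀ i ∈ S, c*u i+e ≠ 0) :
    (∏ p ∈ (S ×ˢ S).filter (fun p => p.1 < p.2), (phi a b c e (u p.2) - phi a b c e (u p.1)))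
        * ∏ i ∈ S, (c*u i+e) ^ (S.card - 1)
      = (a*e-b*c) ^ ((S ×ˢ S).filter (fun p => p.1 < p.2)).card
        * ∏ p ∈ (S ×ˢ S).filter (fun p => p.1 < p.2), (u p.2 - u p.1) := by
  have hpair : ∀ p ∈ (S ×ˢ S).filter (fun p => p.1 < p.2),
      phi a b c e (u p.2) - phi a b c e (u p.1)
        = ((a*e-b*c) * (u p.2 - u p.1)) / ((c*u p.1+e) * (c*u p.2+e)) := by
    intro p hp
    rw [Finset.mem_filter, Finset.mem_product] at hp
    rw [phi_sub a b c e _ _ (hu p.2 hp.1.2) (hu p.1 hp.1.1)]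
    rw [mul_comm (c*u p.1+e)]
  rw [Finset.prod_congr rfl hpair, Finset.prod_div_distrib, Finset.prod_mul_distrib,
    Finset.prod_const]
  have hD : ∏ p ∈ (S ×ˢ S).filter (fun p => p.1 < p.2), ((c*u p.1+e) * (c*u p.2+e))
      = ∏ i ∈ S, (c*u i+e) ^ (S.card - 1) := prod_pairs_mul S (fun i => c*u i+e)
  rw [hD]
  have hDne : (∏ i ∈ S, (c*u i+e) ^ (S.card - 1)) ≠ 0 := by
    rw [Finset.prod_ne_zero_iff]
    exact fun i hi => pow_ne_zero _ (hu i hi)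
  field_simp

lemma eval_spechtPoly (cells : Finset (ℕ × ℕ)) (Nb : ℕ × ℕ → ℕ) (u : ℕ → ℝ) :
    eval u (spechtPoly cells Nb)
      = ∏ p ∈ (cells ×ˢ cells).filter (fun p => p.1.2 = p.2.2 ∧ p.2.1 < p.1.1),
          (u (Nb p.1) - u (Nb p.2)) := by
  simp [spechtPoly]

lemma eval_vandBlocks (d : ℕ) (s : ℕ → ℕ) (u : ℕ → ℝ) :
    eval u (vandBlocks d s)
      = ∏ k ∈ Finset.Icc 1 d,
          ∏ p ∈ ((Finset.Icc (qIdx s k) (qIdx s (k+1) - 1)) ×ˢ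
              (Finset.Icc (qIdx s k) (qIdx s (k+1) - 1))).filter (fun p => p.1 < p.2),
            (u p.2 - u p.1) := by
  simp [vandBlocks]

/-- transformation of the Specht polynomial, for a numbering with bijectivity onto
`Icc 1 (2N)`. -/
lemma specht_trans (N : ℕ) (a b c e : ℝ) (Nb : ℕ × ℕ → ℕ)
    (hrange : ∀ cl ∈ cellsCol N, Nb cl ∈ Finset.Icc 1 (2*N))
    (hreindex : ∀ g : ℕ → ℝ, ∏ cl ∈ cellsCol N, g (Nb cl) = ∏ i ∈ Finset.Icc 1 (2*N), g i)
    (u : ℕ → ℝ) (hu : ∀ i ∈ Finset.Icc 1 (2*N), c*u i+e ≠ 0) :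
    eval (fun i => phi a b c e (u i)) (spechtPoly (cellsCol N) Nb)
        * ∏ i ∈ Finset.Icc 1 (2*N), (c*u i+e) ^ (N-1)
      = (a*e-b*c) ^ (N*(N-1)) * eval u (spechtPoly (cellsCol N) Nb) := by
  rw [eval_spechtPoly, eval_spechtPoly]
  have hpair : ∀ p ∈ ((cellsCol N) ×ˢ (cellsCol N)).filter
      (fun p => p.1.2 = p.2.2 ∧ p.2.1 < p.1.1),
      phi a b c e (u (Nb p.1)) - phi a b c e (u (Nb p.2))
        = ((a*e-b*c) * (u (Nb p.1) - u (Nb p.2)))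
            / ((c*u (Nb p.1)+e) * (c*u (Nb p.2)+e)) := by
    intro p hp
    rw [Finset.mem_filter, Finset.mem_product] at hp
    exact phi_sub a b c e _ _ (hu _ (hrange p.1 hp.1.1)) (hu _ (hrange p.2 hp.1.2))
  rw [Finset.prod_congr rfl hpair, Finset.prod_div_distrib, Finset.prod_mul_distrib,
    Finset.prod_const]
  have hD : ∏ p ∈ ((cellsCol N) ×ˢ (cellsCol N)).filter
      (fun p => p.1.2 = p.2.2 ∧ p.2.1 < p.1.1),
      ((c*u (Nb p.1)+e) * (c*u (Nb p.2)+e))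
      = ∏ i ∈ Finset.Icc 1 (2*N), (c*u i+e) ^ (N-1) := by
    rw [prod_specht_pairs N (fun cl => c*u (Nb cl)+e)]
    exact hreindex (fun i => (c*u i+e) ^ (N-1))
  rw [hD, specht_pairs_card]
  have hDne : (∏ i ∈ Finset.Icc 1 (2*N), (c*u i+e) ^ (N-1)) ≠ 0 := by
    rw [Finset.prod_ne_zero_iff]
    exact fun i hi => pow_ne_zero _ (hu i hi)
  field_simp

lemma extendPerm_mem {n : ℕ} (σ : Equiv.Perm (Fin n)) {i : ℕ} (hi : i ∈ Finset.Icc 1 n) :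
    extendPerm n σ i ∈ Finset.Icc 1 n := by
  rw [Finset.mem_Icc] at hi ⊢
  unfold extendPerm
  rw [dif_pos (by omega : 1 ≤ i ∧ i ≤ n)]
  have := (σ ⟨i - 1, by omega⟩).isLt
  omega

lemma extendPerm_inv {n : ℕ} (σ : Equiv.Perm (Fin n)) {i : ℕ} (hi : i ∈ Finset.Icc 1 n) :
    extendPerm n σ⁻¹ (extendPerm n σ i) = i := by
  rw [Finset.mem_Icc] at hi
  have h0 : 1 ≤ i ∧ i ≤ n := by omega
  unfold extendPerm
  rw [dif_pos h0]
  have hjlt := (σ ⟨i - 1, by omega⟩).isLt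
  have h1 : 1 ≤ ((σ ⟨i - 1, by omega⟩ : Fin n) : ℕ) + 1 ∧
      ((σ ⟨i - 1, by omega⟩ : Fin n) : ℕ) + 1 ≤ n := ⟨by omega, by omega⟩
  rw [dif_pos h1]
  have h2 : (⟨((σ ⟨i - 1, by omega⟩ : Fin n) : ℕ) + 1 - 1, by omega⟩ : Fin n)
      = σ ⟨i - 1, by omega⟩ := by
    apply Fin.ext
    simp
  rw [h2, Equiv.Perm.inv_def, Equiv.symm_apply_apply]
  show i - 1 + 1 = i
  omega

lemma prod_extendPerm {n : ℕ} (σ : Equiv.Perm (Fin n)) (g : ℕ → ℝ) :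
    ∏ i ∈ Finset.Icc 1 n, g (extendPerm n σ i) = ∏ i ∈ Finset.Icc 1 n, g i := by
  apply Finset.prod_nbij' (extendPerm n σ) (extendPerm n σ⁻¹)
  · exact fun i hi => extendPerm_mem σ hi
  · exact fun i hi => extendPerm_mem σ⁻¹ hi
  · exact fun i hi => extendPerm_inv σ hi
  · intro i hi
    have := extendPerm_inv σ⁻¹ hi
    rwa [inv_inv] at this
  · exact fun i _ => rfl

lemma eval_pAct (n d : ℕ) (s : ℕ → ℕ) (f : MvPolynomial ℕ ℝ) (u : ℕ → ℝ) :
    eval u (pAct n d s f)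
      = (∏ k ∈ Finset.Icc 1 d, ((s k).factorial : ℝ))⁻¹ *
          ∑ σ ∈ Finset.univ.filter (InBlocks n d s),
            ((Equiv.Perm.sign σ : ℤ) : ℝ) * eval (u ∘ extendPerm n σ) f := by
  unfold pAct
  rw [MvPolynomial.smul_eval, map_sum]
  congr 1
  refine Finset.sum_congr rfl fun σ _ => ?_
  rw [MvPolynomial.smul_eval, MvPolynomial.eval_rename]

/-- transformation of the antisymmetrized Specht polynomial. -/
lemma pAct_trans (N d : ℕ) (s : ℕ → ℕ) (a b c e : ℝ) (Nb : ℕ × ℕ → ℕ)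
    (hrange : ∀ cl ∈ cellsCol N, Nb cl ∈ Finset.Icc 1 (2*N))
    (hreindex : ∀ g : ℕ → ℝ, ∏ cl ∈ cellsCol N, g (Nb cl) = ∏ i ∈ Finset.Icc 1 (2*N), g i)
    (u : ℕ → ℝ) (hu : ∀ i ∈ Finset.Icc 1 (2*N), c*u i+e ≠ 0) :
    eval (fun i => phi a b c e (u i)) (pAct (2*N) d s (spechtPoly (cellsCol N) Nb))
        * ∏ i ∈ Finset.Icc 1 (2*N), (c*u i+e) ^ (N-1)
      = (a*e-b*c) ^ (N*(N-1)) * eval u (pAct (2*N) d s (spechtPoly (cellsCol N) Nb)) := by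
  rw [eval_pAct, eval_pAct]
  set Z := (∏ k ∈ Finset.Icc 1 d, ((s k).factorial : ℝ))⁻¹ with hZ
  set Pn := ∏ i ∈ Finset.Icc 1 (2*N), (c*u i+e) ^ (N-1) with hPn
  set S := Finset.univ.filter (InBlocks (2*N) d s) with hS
  have key : ∀ σ ∈ S,
      (((Equiv.Perm.sign σ : ℤ) : ℝ) * eval ((fun i => phi a b c e (u i)) ∘ extendPerm (2*N) σ)
        (spechtPoly (cellsCol N) Nb)) * Pn
      = (a*e-b*c) ^ (N*(N-1)) * (((Equiv.Perm.sign σ : ℤ) : ℝ)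
          * eval (u ∘ extendPerm (2*N) σ) (spechtPoly (cellsCol N) Nb)) := by
    intro σ _
    have hcomp : (fun i => phi a b c e (u i)) ∘ extendPerm (2*N) σ
        = fun i => phi a b c e ((u ∘ extendPerm (2*N) σ) i) := rfl
    rw [hcomp]
    have hu' : ∀ i ∈ Finset.Icc 1 (2*N), c*(u ∘ extendPerm (2*N) σ) i+e ≠ 0 :=
      fun i hi => hu _ (extendPerm_mem σ hi)
    have hP := specht_trans N a b c e Nb hrange hreindex (u ∘ extendPerm (2*N) σ) hu'
    have hPr : ∏ i ∈ Finset.Icc 1 (2*N), (c*(u ∘ extendPerm (2*N) σ) i+e) ^ (N-1) = Pn := by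
      rw [hPn]
      exact prod_extendPerm σ (fun j => (c*u j+e) ^ (N-1))
    rw [hPr] at hP
    calc (((Equiv.Perm.sign σ : ℤ) : ℝ) * eval (fun i => phi a b c e ((u ∘ extendPerm (2*N) σ) i))
          (spechtPoly (cellsCol N) Nb)) * Pn
        = ((Equiv.Perm.sign σ : ℤ) : ℝ) * (eval (fun i => phi a b c e ((u ∘ extendPerm (2*N) σ) i))
            (spechtPoly (cellsCol N) Nb) * Pn) := by ring
      _ = ((Equiv.Perm.sign σ : ℤ) : ℝ) * ((a*e-b*c) ^ (N*(N-1))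
            * eval (u ∘ extendPerm (2*N) σ) (spechtPoly (cellsCol N) Nb)) := by rw [hP]
      _ = (a*e-b*c) ^ (N*(N-1)) * (((Equiv.Perm.sign σ : ℤ) : ℝ)
            * eval (u ∘ extendPerm (2*N) σ) (spechtPoly (cellsCol N) Nb)) := by ring
  calc (Z * ∑ σ ∈ S, ((Equiv.Perm.sign σ : ℤ) : ℝ)
          * eval ((fun i => phi a b c e (u i)) ∘ extendPerm (2*N) σ) (spechtPoly (cellsCol N) Nb)) * Pn
      = Z * ∑ σ ∈ S, ((((Equiv.Perm.sign σ : ℤ) : ℝ)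
          * eval ((fun i => phi a b c e (u i)) ∘ extendPerm (2*N) σ)
              (spechtPoly (cellsCol N) Nb)) * Pn) := by
        rw [mul_assoc, Finset.sum_mul]
    _ = Z * ∑ σ ∈ S, ((a*e-b*c) ^ (N*(N-1)) * (((Equiv.Perm.sign σ : ℤ) : ℝ)
          * eval (u ∘ extendPerm (2*N) σ) (spechtPoly (cellsCol N) Nb))) := by
        rw [Finset.sum_congr rfl key]
    _ = (a*e-b*c) ^ (N*(N-1)) * (Z * ∑ σ ∈ S, (((Equiv.Perm.sign σ : ℤ) : ℝ)
          * eval (u ∘ extendPerm (2*N) σ) (spechtPoly (cellsCol N) Nb))) := by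
        rw [← Finset.mul_sum]; ring

/-- transformation of the blocks Vandermonde. -/
lemma vand_trans (N d : ℕ) (s : ℕ → ℕ) (a b c e : ℝ)
    (hsum : ∑ k ∈ Finset.Icc 1 d, s k = 2*N)
    (u : ℕ → ℝ) (hu : ∀ i ∈ Finset.Icc 1 (2*N), c*u i+e ≠ 0) :
    eval (fun i => phi a b c e (u i)) (vandBlocks d s)
        * ∏ k ∈ Finset.Icc 1 d, ∏ i ∈ Finset.Icc (qIdx s k) (qIdx s (k+1) - 1),
            (c*u i+e) ^ (s k - 1)
      = (a*e-b*c) ^ (∑ k ∈ Finset.Icc 1 d,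
            (((Finset.Icc (qIdx s k) (qIdx s (k+1) - 1)) ×ˢ
              (Finset.Icc (qIdx s k) (qIdx s (k+1) - 1))).filter (fun p => p.1 < p.2)).card)
          * eval u (vandBlocks d s) := by
  rw [eval_vandBlocks, eval_vandBlocks, ← Finset.prod_mul_distrib,
    ← Finset.prod_pow_eq_pow_sum, ← Finset.prod_mul_distrib]
  refine Finset.prod_congr rfl fun k hk => ?_
  rw [Finset.mem_Icc] at hk
  have hS : (Finset.Icc (qIdx s k) (qIdx s (k+1) - 1)).card = s k := block_card s hk.1
  have hu' : ∀ i ∈ Finset.Icc (qIdx s k) (qIdx s (k+1) - 1), c*u i+e ≠ 0 := by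
    intro i hi
    exact hu i (block_subset s d N hsum (Finset.mem_Icc.mpr hk) hi)
  have := blockV a b c e (Finset.Icc (qIdx s k) (qIdx s (k+1) - 1)) u hu'
  rw [hS] at this
  exact this

end Mobius



section QCov

lemma vandBlocks_ne_zero (d : ℕ) (s : ℕ → ℕ) : vandBlocks d s ≠ 0 := by
  unfold vandBlocks
  rw [Finset.prod_ne_zero_iff]
  intro k _
  rw [Finset.prod_ne_zero_iff]
  intro p hp
  rw [Finset.mem_filter] at hp
  have hne : p.1 ≠ p.2 := ne_of_lt hp.2
  intro hzero
  rw [sub_eq_zero] at hzero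
  exact hne (MvPolynomial.X_injective hzero).symm

/-- the truncating substitution. -/
def g0 (n : ℕ) : ℕ → MvPolynomial ℕ ℝ := fun i => if 1 ≤ i ∧ i ≤ n then X i else 0

lemma bind_g0_X {n i : ℕ} (hi : i ∈ Finset.Icc 1 n) :
    MvPolynomial.bind₁ (g0 n) (X i : MvPolynomial ℕ ℝ) = X i := by
  rw [Finset.mem_Icc] at hi
  rw [MvPolynomial.bind₁_X_right]
  unfold g0
  rw [if_pos hi]

lemma bind_g0_fix_vand (N d : ℕ) (s : ℕ → ℕ) (hsum : ∑ k ∈ Finset.Icc 1 d, s k = 2*N) :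
    MvPolynomial.bind₁ (g0 (2*N)) (vandBlocks d s) = vandBlocks d s := by
  unfold vandBlocks
  rw [map_prod]
  refine Finset.prod_congr rfl fun k hk => ?_
  rw [map_prod]
  refine Finset.prod_congr rfl fun p hp => ?_
  rw [Finset.mem_filter, Finset.mem_product] at hp
  rw [map_sub, bind_g0_X (block_subset s d N hsum hk hp.1.2),
    bind_g0_X (block_subset s d N hsum hk hp.1.1)]

lemma bind_g0_fix_pAct (N d : ℕ) (s : ℕ → ℕ) (Nb : ℕ × ℕ → ℕ)
    (hrange : ∀ cl ∈ cellsCol N, Nb cl ∈ Finset.Icc 1 (2*N)) :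
    MvPolynomial.bind₁ (g0 (2*N)) (pAct (2*N) d s (spechtPoly (cellsCol N) Nb))
      = pAct (2*N) d s (spechtPoly (cellsCol N) Nb) := by
  unfold pAct
  rw [map_smul, map_sum]
  congr 1
  refine Finset.sum_congr rfl fun σ _ => ?_
  rw [map_smul]
  congr 1
  unfold spechtPoly
  rw [map_prod, map_prod]
  refine Finset.prod_congr rfl fun p hp => ?_
  rw [Finset.mem_filter, Finset.mem_product] at hp
  rw [map_sub, map_sub, MvPolynomial.rename_X, MvPolynomial.rename_X,
    bind_g0_X (extendPerm_mem σ (hrange p.1 hp.1.1)),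
    bind_g0_X (extendPerm_mem σ (hrange p.2 hp.1.2))]

lemma eval_bind_g0 (n : ℕ) (p : MvPolynomial ℕ ℝ) (v : ℕ → ℝ) :
    eval v (MvPolynomial.bind₁ (g0 n) p)
      = eval (fun i => if 1 ≤ i ∧ i ≤ n then v i else 0) p := by
  have h := MvPolynomial.eval₂Hom_bind₁ (RingHom.id ℝ) v (g0 n) p
  have hfun : (fun i => MvPolynomial.eval₂Hom (RingHom.id ℝ) v (g0 n i))
      = (fun i => if 1 ≤ i ∧ i ≤ n then v i else 0) := by
    funext i
    unfold g0
    by_cases hi : 1 ≤ i ∧ i ≤ n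
    · rw [if_pos hi, if_pos hi]
      simp
    · rw [if_neg hi, if_neg hi]
      simp
  calc eval v (MvPolynomial.bind₁ (g0 n) p)
      = MvPolynomial.eval₂Hom (RingHom.id ℝ) v (MvPolynomial.bind₁ (g0 n) p) := rfl
    _ = MvPolynomial.eval₂Hom (RingHom.id ℝ)
          (fun i => MvPolynomial.eval₂Hom (RingHom.id ℝ) v (g0 n i)) p := h
    _ = eval (fun i => if 1 ≤ i ∧ i ≤ n then v i else 0) p := by rw [hfun]; rfl

lemma Q_fix (N d : ℕ) (s : ℕ → ℕ) (Nb : ℕ × ℕ → ℕ)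
    (hrange : ∀ cl ∈ cellsCol N, Nb cl ∈ Finset.Icc 1 (2*N))
    (hsum : ∑ k ∈ Finset.Icc 1 d, s k = 2*N)
    (Q : MvPolynomial ℕ ℝ)
    (hQ : pAct (2*N) d s (spechtPoly (cellsCol N) Nb) = vandBlocks d s * Q) :
    MvPolynomial.bind₁ (g0 (2*N)) Q = Q := by
  apply mul_left_cancel₀ (vandBlocks_ne_zero d s)
  have h1 := bind_g0_fix_pAct N d s Nb hrange
  rw [hQ, map_mul, bind_g0_fix_vand N d s hsum] at h1
  exact h1

lemma evalQ_ext (N d : ℕ) (s : ℕ → ℕ) (Nb : ℕ × ℕ → ℕ)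
    (hrange : ∀ cl ∈ cellsCol N, Nb cl ∈ Finset.Icc 1 (2*N))
    (hsum : ∑ k ∈ Finset.Icc 1 d, s k = 2*N)
    (Q : MvPolynomial ℕ ℝ)
    (hQ : pAct (2*N) d s (spechtPoly (cellsCol N) Nb) = vandBlocks d s * Q)
    (v v' : ℕ → ℝ) (h : ∀ i, 1 ≤ i ∧ i ≤ 2*N → v i = v' i) :
    eval v Q = eval v' Q := by
  have hfix := Q_fix N d s Nb hrange hsum Q hQ
  rw [← hfix, eval_bind_g0, eval_bind_g0]
  have hfun : (fun i => if 1 ≤ i ∧ i ≤ 2*N then v i else 0)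
      = (fun i => if 1 ≤ i ∧ i ≤ 2*N then v' i else 0) := by
    funext i
    by_cases hi : 1 ≤ i ∧ i ≤ 2*N
    · rw [if_pos hi, if_pos hi, h i hi]
    · rw [if_neg hi, if_neg hi]
  rw [hfun]

/-- Covariance of the quotient at generic points. -/
lemma Q_cov (N d : ℕ) (s : ℕ → ℕ) (a b c e : ℝ) (hdet : b*c < a*e) (Nb : ℕ × ℕ → ℕ)
    (hrange : ∀ cl ∈ cellsCol N, Nb cl ∈ Finset.Icc 1 (2*N))
    (hreindex : ∀ g : ℕ → ℝ, ∏ cl ∈ cellsCol N, g (Nb cl) = ∏ i ∈ Finset.Icc 1 (2*N), g i)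
    (hsum : ∑ k ∈ Finset.Icc 1 d, s k = 2*N)
    (Q : MvPolynomial ℕ ℝ)
    (hQ : pAct (2*N) d s (spechtPoly (cellsCol N) Nb) = vandBlocks d s * Q)
    (u : ℕ → ℝ) (hu : ∀ i ∈ Finset.Icc 1 (2*N), c*u i+e ≠ 0)
    (hVu : eval u (vandBlocks d s) ≠ 0) :
    eval (fun i => phi a b c e (u i)) Q * (∏ i ∈ Finset.Icc 1 (2*N), (c*u i+e) ^ (N-1))
        * (a*e-b*c) ^ (∑ k ∈ Finset.Icc 1 d,
            (((Finset.Icc (qIdx s k) (qIdx s (k+1) - 1)) ×ˢ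
              (Finset.Icc (qIdx s k) (qIdx s (k+1) - 1))).filter (fun p => p.1 < p.2)).card)
      = (a*e-b*c) ^ (N*(N-1)) * eval u Q *
          ∏ k ∈ Finset.Icc 1 d, ∏ i ∈ Finset.Icc (qIdx s k) (qIdx s (k+1) - 1),
            (c*u i+e) ^ (s k - 1) := by
  have hΔ : (0:ℝ) < a*e-b*c := by linarith
  set Bsum := ∑ k ∈ Finset.Icc 1 d,
      (((Finset.Icc (qIdx s k) (qIdx s (k+1) - 1)) ×ˢ
        (Finset.Icc (qIdx s k) (qIdx s (k+1) - 1))).filter (fun p => p.1 < p.2)).card with hBsum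
  set vE := eval u (vandBlocks d s) with hvE
  set qE := eval u Q with hqE
  set VPhi := eval (fun i => phi a b c e (u i)) (vandBlocks d s) with hVPhi
  set qPhi := eval (fun i => phi a b c e (u i)) Q with hqPhi
  set Pn := ∏ i ∈ Finset.Icc 1 (2*N), (c*u i+e) ^ (N-1) with hPn
  set Ps := ∏ k ∈ Finset.Icc 1 d, ∏ i ∈ Finset.Icc (qIdx s k) (qIdx s (k+1) - 1),
      (c*u i+e) ^ (s k - 1) with hPs
  have h2 : VPhi * Ps = (a*e-b*c) ^ Bsum * vE := vand_trans N d s a b c e hsum u hu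
  have h1 : (VPhi * qPhi) * Pn = (a*e-b*c) ^ (N*(N-1)) * (vE * qE) := by
    have := pAct_trans N d s a b c e Nb hrange hreindex u hu
    rw [hQ, map_mul, map_mul] at this
    rw [← hVPhi, ← hqPhi, ← hvE, ← hqE] at this
    rw [mul_assoc] at this ⊢
    exact this
  have hVPhine : VPhi ≠ 0 := by
    intro h0
    rw [h0, zero_mul] at h2
    exact (mul_ne_zero (pow_ne_zero _ (ne_of_gt hΔ)) hVu) h2.symm
  apply mul_right_cancel₀ hVPhine
  linear_combination ((a*e-b*c) ^ Bsum) * h1 - ((a*e-b*c) ^ (N*(N-1)) * qE) * h2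

end QCov

section Cont

lemma continuousAt_evalPoly (p : MvPolynomial ℕ ℝ) (f : ℕ → ℝ → ℝ) (t0 : ℝ)
    (hf : ∀ i, ContinuousAt (f i) t0) :
    ContinuousAt (fun t => eval (fun i => f i t) p) t0 := by
  induction p using MvPolynomial.induction_on with
  | C a => simpa using continuousAt_const
  | add p q hp hq =>
      simp only [map_add]
      exact hp.add hq
  | mul_X p i hp =>
      simp only [map_mul, MvPolynomial.eval_X]
      exact hp.mul (hf i)

end Cont

section Sign

lemma Icc_sum_fin {M : Type*} [AddCommMonoid M] (d : ℕ) (f : ℕ → M) :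
    ∑ k ∈ Finset.Icc 1 d, f k = ∑ i : Fin d, f (i+1) := by
  have h : Finset.Icc 1 d = (Finset.range d).image (· + 1) := by
    ext k
    simp only [Finset.mem_Icc, Finset.mem_image, Finset.mem_range]
    constructor
    · intro hk
      exact ⟨k - 1, by omega, by omega⟩
    · rintro ⟨j, hj, rfl⟩
      omega
  rw [h, Finset.sum_image]
  · rw [← Fin.sum_univ_eq_sum_range (fun j => f (j+1))]
  · intro i _ j _ hij
    simp only at hij
    omega

lemma Icc_prod_fin (d : ℕ) (f : ℕ → ℝ) :
    ∏ k ∈ Finset.Icc 1 d, f k = ∏ i : Fin d, f (i+1) := by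
  have h : Finset.Icc 1 d = (Finset.range d).image (· + 1) := by
    ext k
    simp only [Finset.mem_Icc, Finset.mem_image, Finset.mem_range]
    constructor
    · intro hk
      exact ⟨k - 1, by omega, by omega⟩
    · rintro ⟨j, hj, rfl⟩
      omega
  rw [h, Finset.prod_image]
  · rw [← Fin.prod_univ_eq_prod_range (fun j => f (j+1))]
  · intro i _ j _ hij
    simp only at hij
    omega

lemma same_sign (d : ℕ) (hd : 0 < d) (P : Fin d → ℝ) (hne : ∀ i, P i ≠ 0)
    (hpair : ∀ i j : Fin d, i < j → 0 < P i * P j) :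
    (∀ i, 0 < P i) ∨ (∀ i, P i < 0) := by
  set i0 : Fin d := ⟨0, hd⟩ with hi0
  rcases lt_or_gt_of_ne (hne i0) with h0 | h0
  · right
    intro i
    rcases eq_or_ne i i0 with rfl | hne'
    · exact h0
    · have hlt : i0 < i := by
        rcases Fin.lt_or_lt_of_ne hne' with h | h
        · exact absurd h (by simp [hi0, Fin.lt_def])
        · exact h
      have := hpair i0 i hlt
      nlinarith
  · left
    intro i
    rcases eq_or_ne i i0 with rfl | hne'
    · exact h0
    · have hlt : i0 < i := by
        rcases Fin.lt_or_lt_of_ne hne' with h | h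
        · exact absurd h (by simp [hi0, Fin.lt_def])
        · exact h
      have := hpair i0 i hlt
      nlinarith

lemma prod_pow_pos_of_same_sign (d : ℕ) (P : Fin d → ℝ)
    (hsign : (∀ i, 0 < P i) ∨ (∀ i, P i < 0)) (t : Fin d → ℕ)
    (ht : Even (∑ i, t i)) : 0 < ∏ i, P i ^ t i := by
  rcases hsign with hpos | hneg
  · exact Finset.prod_pos fun i _ => pow_pos (hpos i) _
  · have h1 : ∏ i, P i ^ t i = ((-1:ℝ) ^ (∑ i, t i)) * ∏ i, (-P i) ^ t i := by
      rw [← Finset.prod_pow_eq_pow_sum, ← Finset.prod_mul_distrib]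
      refine Finset.prod_congr rfl fun i _ => ?_
      rw [← mul_pow]
      ring_nf
    rw [h1, ht.neg_one_pow, one_mul]
    exact Finset.prod_pos fun i _ => pow_pos (by linarith [hneg i]) _

end Sign




lemma final_alg (d : ℕ) (n1 : ℝ) (w L : Fin d → ℝ) (G : ℝ) (DD : Fin d × Fin d → ℝ)
    (A B : ℝ) (hW : ∑ i, w i = 2*n1) (hA : A = n1*(n1-1))
    (hB : B = ∑ i, (w i*(w i-1))/2) :
    (∑ p ∈ (Finset.univ ×ˢ Finset.univ).filter (fun p : Fin d × Fin d => p.1 < p.2),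
        ((-(w p.1 * w p.2)/2) * (G + DD p - L p.1 - L p.2)))
      + A*G + ∑ i, (w i*(w i-1))*L i
    = (∑ i, ((-(w i^2)/4) * (G - 2*L i)))
      + (∑ p ∈ (Finset.univ ×ˢ Finset.univ).filter (fun p : Fin d × Fin d => p.1 < p.2),
          ((-(w p.1 * w p.2)/2) * DD p))
      + (∑ i, (w i*(n1-1))*L i) + B*G := by
  have hsplit : ∀ p : Fin d × Fin d, (-(w p.1 * w p.2)/2) * (G + DD p - L p.1 - L p.2)
      = (w p.1 * w p.2 * (L p.1 + L p.2)) * (1/2) + (-(w p.1 * w p.2)/2) * DD p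
        + (w p.1 * w p.2) * (-(G/2)) := fun p => by ring
  have e1 : ∑ p ∈ (Finset.univ ×ˢ Finset.univ).filter (fun p : Fin d × Fin d => p.1 < p.2),
      ((-(w p.1 * w p.2)/2) * (G + DD p - L p.1 - L p.2))
      = (∑ i, w i * L i * ((∑ j, w j) - w i)) * (1/2)
        + (∑ p ∈ (Finset.univ ×ˢ Finset.univ).filter (fun p : Fin d × Fin d => p.1 < p.2),
            ((-(w p.1 * w p.2)/2) * DD p))
        + (∑ p ∈ (Finset.univ ×ˢ Finset.univ).filter (fun p : Fin d × Fin d => p.1 < p.2),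
            w p.1 * w p.2) * (-(G/2)) := by
    rw [Finset.sum_congr rfl (fun p _ => hsplit p), Finset.sum_add_distrib,
      Finset.sum_add_distrib, ← Finset.sum_mul, ← Finset.sum_mul,
      sum_pairs_weight Finset.univ w L]
  have e2 : ∑ p ∈ (Finset.univ ×ˢ Finset.univ).filter (fun p : Fin d × Fin d => p.1 < p.2),
      w p.1 * w p.2 = ((∑ i, w i)^2 - ∑ i, w i^2)/2 := by
    have := two_mul_sum_pairs_w (Finset.univ : Finset (Fin d)) w
    linarith
  have e3 : ∑ i, w i * L i * ((∑ j, w j) - w i)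
      = (∑ j, w j)*(∑ i, w i*L i) - ∑ i, w i^2*L i := by
    rw [Finset.mul_sum, ← Finset.sum_sub_distrib]
    exact Finset.sum_congr rfl fun i _ => by ring
  have e4 : ∑ i, (w i*(w i-1))*L i = (∑ i, w i^2*L i) - ∑ i, w i*L i := by
    rw [← Finset.sum_sub_distrib]
    exact Finset.sum_congr rfl fun i _ => by ring
  have e5 : ∑ i, ((-(w i^2)/4) * (G - 2*L i))
      = (∑ i, w i^2)*(-(G/4)) + (∑ i, w i^2*L i)*(1/2) := by
    rw [Finset.sum_mul, Finset.sum_mul, ← Finset.sum_add_distrib]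
    exact Finset.sum_congr rfl fun i _ => by ring
  have e6 : ∑ i, (w i*(n1-1))*L i = (n1-1)*∑ i, w i*L i := by
    rw [Finset.mul_sum]
    exact Finset.sum_congr rfl fun i _ => by ring
  have e7 : B = ((∑ i, w i^2) - (∑ i, w i))/2 := by
    rw [hB, ← Finset.sum_div, ← Finset.sum_sub_distrib]
    congr 1
    exact Finset.sum_congr rfl fun i _ => by ring
  rw [e1, e2, e3, e4, e5, e6, e7, hA]
  linear_combination ((∑ i, w i*L i)/2 - G*((∑ i, w i) + 2*n1)/4 + G/2) * hW




lemma dagger (N d : ℕ) (hN : 0 < N) (hd : 0 < d) (s : ℕ → ℕ)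
    (hpos : ∀ k ∈ Finset.Icc 1 d, 0 < s k)
    (hsum : ∑ k ∈ Finset.Icc 1 d, s k = 2 * N)
    (a b c e : ℝ) (hdet : b * c < a * e)
    (x : Fin d → ℝ) (hx : StrictMono x)
    (hpole : ∀ i, c * x i + e ≠ 0)
    (hord : StrictMono fun i => (a * x i + b) / (c * x i + e))
    (Bsum : ℕ)
    (hBsum : (Bsum:ℝ) = ∑ i : Fin d,
      ((s ((i:ℕ)+1) : ℝ) * ((s ((i:ℕ)+1) : ℝ) - 1))/2) :
    (∏ p ∈ (Finset.univ ×ˢ Finset.univ).filter (fun p : Fin d × Fin d => p.1 < p.2),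
        ((a * x p.2 + b) / (c * x p.2 + e) - (a * x p.1 + b) / (c * x p.1 + e)) ^
          (-(((s ((p.1:ℕ)+1) * s ((p.2:ℕ)+1) : ℕ) : ℝ)) / 2))
      * (a*e - b*c) ^ (N*(N-1))
      * (∏ i : Fin d, ((c * x i + e) ^ (s ((i:ℕ)+1) - 1)) ^ (s ((i:ℕ)+1)))
    = (∏ i : Fin d, ((a*e - b*c) / (c * x i + e) ^ 2) ^
          (-((s ((i:ℕ)+1) : ℝ)) ^ 2 / 4))
      * (∏ p ∈ (Finset.univ ×ˢ Finset.univ).filter (fun p : Fin d × Fin d => p.1 < p.2),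
          (x p.2 - x p.1) ^ (-(((s ((p.1:ℕ)+1) * s ((p.2:ℕ)+1) : ℕ) : ℝ)) / 2))
      * ((∏ i : Fin d, ((c * x i + e) ^ (N - 1)) ^ (s ((i:ℕ)+1)))
          * (a*e - b*c) ^ Bsum) := by
  have hΔ : (0:ℝ) < a*e - b*c := by linarith
  have hΔne : a*e - b*c ≠ 0 := ne_of_gt hΔ
  set n1 : ℝ := (N:ℝ) with hn1
  set w : Fin d → ℝ := fun i => (s ((i:ℕ)+1) : ℝ) with hw
  set L : Fin d → ℝ := fun i => Real.log (c * x i + e) with hL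
  set G : ℝ := Real.log (a*e - b*c) with hG
  set DD : Fin d × Fin d → ℝ := fun p => Real.log (x p.2 - x p.1) with hDD
  have hw1 : ∀ i : Fin d, 1 ≤ s ((i:ℕ)+1) := by
    intro i
    have := hpos ((i:ℕ)+1) (Finset.mem_Icc.mpr ⟨by omega, by omega⟩)
    omega
  have hxdiff : ∀ p ∈ (Finset.univ ×ˢ Finset.univ).filter
      (fun p : Fin d × Fin d => p.1 < p.2), 0 < x p.2 - x p.1 := by
    intro p hp
    rw [Finset.mem_filter] at hp
    exact sub_pos.mpr (hx hp.2)
  have hphidiff : ∀ p ∈ (Finset.univ ×ˢ Finset.univ).filter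
      (fun p : Fin d × Fin d => p.1 < p.2),
      0 < (a * x p.2 + b) / (c * x p.2 + e) - (a * x p.1 + b) / (c * x p.1 + e) := by
    intro p hp
    rw [Finset.mem_filter] at hp
    exact sub_pos.mpr (hord hp.2)
  have hphieq : ∀ u v : Fin d,
      (a * x u + b) / (c * x u + e) - (a * x v + b) / (c * x v + e)
        = ((a*e - b*c) * (x u - x v)) / ((c * x u + e) * (c * x v + e)) :=
    fun u v => phi_sub a b c e (x u) (x v) (hpole u) (hpole v)
  have hpairpos : ∀ i j : Fin d, i < j → 0 < (c * x i + e) * (c * x j + e) := by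
    intro i j hij
    have h1 : 0 < (a * x j + b) / (c * x j + e) - (a * x i + b) / (c * x i + e) :=
      sub_pos.mpr (hord hij)
    have h2 : 0 < (a*e - b*c) * (x j - x i) := mul_pos hΔ (sub_pos.mpr (hx hij))
    have h3 := hphieq j i
    have h5 : 0 < (c * x j + e) * (c * x i + e) := by
      by_contra hle
      push_neg at hle
      have h6 : (c * x j + e) * (c * x i + e) ≠ 0 := mul_ne_zero (hpole j) (hpole i)
      have h7 : (c * x j + e) * (c * x i + e) < 0 := lt_of_le_of_ne hle h6
      have h8 := div_neg_of_pos_of_neg h2 h7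
      rw [← h3] at h8
      linarith
    nlinarith [h5]
  have hsign : (∀ i, 0 < c * x i + e) ∨ (∀ i, c * x i + e < 0) :=
    same_sign d hd (fun i => c * x i + e) hpole hpairpos
  have sFin : ∑ i : Fin d, s ((i:ℕ)+1) = 2*N := by
    rw [← Icc_sum_fin d s]
    exact hsum
  have hW : ∑ i, w i = 2*n1 := by
    have := congrArg (Nat.cast : ℕ → ℝ) sFin
    push_cast at this
    exact this
  -- positivity of the four pieces
  have hP1 : ∀ i : Fin d, ((c * x i + e) ^ (N - 1)) ^ (s ((i:ℕ)+1))
      = (c * x i + e) ^ ((N-1) * s ((i:ℕ)+1)) := fun i => (pow_mul _ _ _).symm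
  have hPi1pos : 0 < ∏ i : Fin d, ((c * x i + e) ^ (N - 1)) ^ (s ((i:ℕ)+1)) := by
    rw [Finset.prod_congr rfl (fun i _ => hP1 i)]
    apply prod_pow_pos_of_same_sign d _ hsign
    have : ∑ i : Fin d, (N-1) * s ((i:ℕ)+1) = (N-1) * (2*N) := by
      rw [← Finset.mul_sum, sFin]
    rw [this]
    exact ⟨(N-1)*N, by ring⟩
  have hPi2pos : 0 < ∏ i : Fin d, ((c * x i + e) ^ (s ((i:ℕ)+1) - 1)) ^ (s ((i:ℕ)+1)) := by
    apply Finset.prod_pos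
    intro i _
    rw [← pow_mul]
    apply Even.pow_pos _ (hpole i)
    have h1 := Nat.even_mul_succ_self (s ((i:ℕ)+1) - 1)
    rwa [Nat.sub_add_cancel (hw1 i)] at h1
  have hPrefPhipos : 0 < ∏ p ∈ (Finset.univ ×ˢ Finset.univ).filter
      (fun p : Fin d × Fin d => p.1 < p.2),
      ((a * x p.2 + b) / (c * x p.2 + e) - (a * x p.1 + b) / (c * x p.1 + e)) ^
        (-(((s ((p.1:ℕ)+1) * s ((p.2:ℕ)+1) : ℕ) : ℝ)) / 2) :=
    Finset.prod_pos fun p hp => Real.rpow_pos_of_pos (hphidiff p hp) _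
  have hPrefpos : 0 < ∏ p ∈ (Finset.univ ×ˢ Finset.univ).filter
      (fun p : Fin d × Fin d => p.1 < p.2),
      (x p.2 - x p.1) ^ (-(((s ((p.1:ℕ)+1) * s ((p.2:ℕ)+1) : ℕ) : ℝ)) / 2) :=
    Finset.prod_pos fun p hp => Real.rpow_pos_of_pos (hxdiff p hp) _
  have hRfacpos : 0 < ∏ i : Fin d, ((a*e - b*c) / (c * x i + e) ^ 2) ^
      (-((s ((i:ℕ)+1) : ℝ)) ^ 2 / 4) :=
    Finset.prod_pos fun i _ => Real.rpow_pos_of_pos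
      (div_pos hΔ (pow_two_pos_of_ne_zero (hpole i))) _
  have hLpos : 0 < (∏ p ∈ (Finset.univ ×ˢ Finset.univ).filter
      (fun p : Fin d × Fin d => p.1 < p.2),
      ((a * x p.2 + b) / (c * x p.2 + e) - (a * x p.1 + b) / (c * x p.1 + e)) ^
        (-(((s ((p.1:ℕ)+1) * s ((p.2:ℕ)+1) : ℕ) : ℝ)) / 2))
      * (a*e - b*c) ^ (N*(N-1))
      * (∏ i : Fin d, ((c * x i + e) ^ (s ((i:ℕ)+1) - 1)) ^ (s ((i:ℕ)+1))) :=
    mul_pos (mul_pos hPrefPhipos (pow_pos hΔ _)) hPi2pos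
  have hRpos : 0 < (∏ i : Fin d, ((a*e - b*c) / (c * x i + e) ^ 2) ^
          (-((s ((i:ℕ)+1) : ℝ)) ^ 2 / 4))
      * (∏ p ∈ (Finset.univ ×ˢ Finset.univ).filter
          (fun p : Fin d × Fin d => p.1 < p.2),
          (x p.2 - x p.1) ^ (-(((s ((p.1:ℕ)+1) * s ((p.2:ℕ)+1) : ℕ) : ℝ)) / 2))
      * ((∏ i : Fin d, ((c * x i + e) ^ (N - 1)) ^ (s ((i:ℕ)+1)))
          * (a*e - b*c) ^ Bsum) :=
    mul_pos (mul_pos hRfacpos hPrefpos) (mul_pos hPi1pos (pow_pos hΔ _))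
  -- logs of the pieces
  have logPrefPhi : Real.log (∏ p ∈ (Finset.univ ×ˢ Finset.univ).filter
      (fun p : Fin d × Fin d => p.1 < p.2),
      ((a * x p.2 + b) / (c * x p.2 + e) - (a * x p.1 + b) / (c * x p.1 + e)) ^
        (-(((s ((p.1:ℕ)+1) * s ((p.2:ℕ)+1) : ℕ) : ℝ)) / 2))
      = ∑ p ∈ (Finset.univ ×ˢ Finset.univ).filter (fun p : Fin d × Fin d => p.1 < p.2),
          ((-(w p.1 * w p.2)/2) * (G + DD p - L p.1 - L p.2)) := by
    rw [Real.log_prod (fun p hp => ne_of_gt (Real.rpow_pos_of_pos (hphidiff p hp) _))]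
    refine Finset.sum_congr rfl fun p hp => ?_
    rw [Real.log_rpow (hphidiff p hp)]
    have hcast : (((s ((p.1:ℕ)+1) * s ((p.2:ℕ)+1) : ℕ)) : ℝ) = w p.1 * w p.2 := by
      push_cast
      rfl
    have hdne : x p.2 - x p.1 ≠ 0 := ne_of_gt (hxdiff p hp)
    have hP2ne : c * x p.2 + e ≠ 0 := hpole p.2
    have hP1ne : c * x p.1 + e ≠ 0 := hpole p.1
    rw [hphieq p.2 p.1, Real.log_div (mul_ne_zero hΔne hdne) (mul_ne_zero hP2ne hP1ne),
      Real.log_mul hΔne hdne, Real.log_mul hP2ne hP1ne, hcast]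
    show -(w p.1 * w p.2) / 2 * (G + DD p - (L p.2 + L p.1))
      = -(w p.1 * w p.2) / 2 * (G + DD p - L p.1 - L p.2)
    ring
  have logPref : Real.log (∏ p ∈ (Finset.univ ×ˢ Finset.univ).filter
      (fun p : Fin d × Fin d => p.1 < p.2),
      (x p.2 - x p.1) ^ (-(((s ((p.1:ℕ)+1) * s ((p.2:ℕ)+1) : ℕ) : ℝ)) / 2))
      = ∑ p ∈ (Finset.univ ×ˢ Finset.univ).filter (fun p : Fin d × Fin d => p.1 < p.2),
          ((-(w p.1 * w p.2)/2) * DD p) := by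
    rw [Real.log_prod (fun p hp => ne_of_gt (Real.rpow_pos_of_pos (hxdiff p hp) _))]
    refine Finset.sum_congr rfl fun p hp => ?_
    rw [Real.log_rpow (hxdiff p hp)]
    have hcast : (((s ((p.1:ℕ)+1) * s ((p.2:ℕ)+1) : ℕ)) : ℝ) = w p.1 * w p.2 := by
      push_cast
      rfl
    rw [hcast]
  have logPi2 : Real.log (∏ i : Fin d, ((c * x i + e) ^ (s ((i:ℕ)+1) - 1)) ^ (s ((i:ℕ)+1)))
      = ∑ i, (w i*(w i-1))*L i := by
    rw [Real.log_prod (fun i _ => by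
      rw [← pow_mul]
      exact pow_ne_zero _ (hpole i))]
    refine Finset.sum_congr rfl fun i _ => ?_
    rw [Real.log_pow, Real.log_pow]
    have hcast : ((s ((i:ℕ)+1) - 1 : ℕ) : ℝ) = w i - 1 := by
      have := hw1 i
      push_cast [Nat.cast_sub this]
      rfl
    rw [hcast]
    show (w i) * ((w i - 1) * L i) = (w i*(w i-1))*L i
    ring
  have logPi1 : Real.log (∏ i : Fin d, ((c * x i + e) ^ (N - 1)) ^ (s ((i:ℕ)+1)))
      = ∑ i, (w i*(n1-1))*L i := by
    rw [Real.log_prod (fun i _ => by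
      rw [← pow_mul]
      exact pow_ne_zero _ (hpole i))]
    refine Finset.sum_congr rfl fun i _ => ?_
    rw [Real.log_pow, Real.log_pow]
    have hcast : ((N - 1 : ℕ) : ℝ) = n1 - 1 := by
      push_cast [Nat.cast_sub hN]
      rfl
    rw [hcast]
    show (w i) * ((n1 - 1) * L i) = (w i*(n1-1))*L i
    ring
  have logRfac : Real.log (∏ i : Fin d, ((a*e - b*c) / (c * x i + e) ^ 2) ^
          (-((s ((i:ℕ)+1) : ℝ)) ^ 2 / 4))
      = ∑ i, ((-(w i^2)/4) * (G - 2*L i)) := by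
    rw [Real.log_prod (fun i _ => ne_of_gt (Real.rpow_pos_of_pos
      (div_pos hΔ (pow_two_pos_of_ne_zero (hpole i))) _))]
    refine Finset.sum_congr rfl fun i _ => ?_
    rw [Real.log_rpow (div_pos hΔ (pow_two_pos_of_ne_zero (hpole i))),
      Real.log_div hΔne (pow_ne_zero 2 (hpole i)), Real.log_pow]
    show -(w i) ^ 2 / 4 * (G - (2:ℕ) * L i) = (-(w i^2)/4) * (G - 2*L i)
    push_cast
    ring
  have hA : ((N*(N-1) : ℕ) : ℝ) = n1*(n1-1) := by
    push_cast [Nat.cast_sub hN]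
    rfl
  have hB : (Bsum : ℝ) = ∑ i, (w i*(w i-1))/2 := hBsum
  -- conclude
  rw [← Real.exp_log hLpos, ← Real.exp_log hRpos]
  congr 1
  rw [Real.log_mul (ne_of_gt (mul_pos hPrefPhipos (pow_pos hΔ _))) (ne_of_gt hPi2pos),
    Real.log_mul (ne_of_gt hPrefPhipos) (ne_of_gt (pow_pos hΔ _)),
    Real.log_mul (ne_of_gt (mul_pos hRfacpos hPrefpos))
      (ne_of_gt (mul_pos hPi1pos (pow_pos hΔ _))),
    Real.log_mul (ne_of_gt hRfacpos) (ne_of_gt hPrefpos),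
    Real.log_mul (ne_of_gt hPi1pos) (ne_of_gt (pow_pos hΔ _)),
    logPrefPhi, logPref, logPi1, logPi2, logRfac, Real.log_pow, Real.log_pow]
  linear_combination final_alg d n1 w L G DD ((N*(N-1) : ℕ) : ℝ) (Bsum : ℝ) hW hA hB


end FusedCov



open FusedCov in
/-- Möbius covariance of the fused conformal block functions. For
`T ∈ CSYT^{(N,N)}_ς` and a Möbius transformation `φ` of the upper half-plane preserving
the order of the points,
`𝓤_T(φ(x_1), …, φ(x_d)) = ∏_i φ'(x_i)^{-s_i²/4} 𝓤_T(x_1, …, x_d)`. -/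
theorem Ublock_mobius_covariance
    (N d : ℕ) (hN : 0 < N) (hd : 0 < d) (s : ℕ → ℕ)
    (hpos : ∀ k ∈ Finset.Icc 1 d, 0 < s k)
    (hsum : ∑ k ∈ Finset.Icc 1 d, s k = 2 * N)
    (T : ℕ × ℕ → ℕ) (hT : T ∈ CSYTsetNN N d s)
    (a b c e : ℝ) (hdet : b * c < a * e)
    (x : Fin d → ℝ) (hx : StrictMono x)
    (hpole : ∀ i, c * x i + e ≠ 0)
    (hord : StrictMono fun i => (a * x i + b) / (c * x i + e)) :
    Ublock N d s T (fun i => (a * x i + b) / (c * x i + e))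
      = (∏ i : Fin d,
          ((a * e - b * c) / (c * x i + e) ^ 2) ^
            (-(((s ((i : ℕ) + 1) : ℝ)) ^ 2) / 4)) *
        Ublock N d s T x := by
  have hΔ : (0:ℝ) < a*e - b*c := by linarith
  have hΔne : a*e - b*c ≠ 0 := ne_of_gt hΔ
  obtain ⟨-, hTcont, -⟩ := hT
  have hcont : ∀ k ∈ Finset.Icc 1 d,
      ((cellsCol N).filter (fun cl => transposeFill T cl = k)).card = s k :=
    fun k hk => (content_transpose N T k).trans (hTcont k hk)
  have hrange : ∀ cl ∈ cellsCol N,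
      stdize s (cellsCol N) (transposeFill T) cl ∈ Finset.Icc 1 (2*N) := by
    intro cl hcl
    have := stdize_mem_Icc N d s (transposeFill T) hcont hsum hcl
    rw [Finset.mem_Icc]
    exact this
  have hreindex := prod_stdize_reindex N d s (transposeFill T) hcont hsum
  by_cases hdiv : ∃ g, pAct (2*N) d s
      (spechtPoly (cellsCol N) (stdize s (cellsCol N) (transposeFill T)))
      = vandBlocks d s * g
  case neg =>
    have h0 : fusedSpecht (2*N) d s (cellsCol N) (transposeFill T) = 0 := by
      unfold fusedSpecht exactQuot
      rw [dif_neg hdiv, map_zero]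
    unfold Ublock
    rw [h0]
    unfold evalAt
    simp
  case pos =>
  set Q : MvPolynomial ℕ ℝ := hdiv.choose with hQdef
  have hQ : pAct (2*N) d s
      (spechtPoly (cellsCol N) (stdize s (cellsCol N) (transposeFill T)))
      = vandBlocks d s * Q := hdiv.choose_spec
  have hfused : fusedSpecht (2*N) d s (cellsCol N) (transposeFill T)
      = MvPolynomial.rename (collapseVar d s) Q := by
    unfold fusedSpecht exactQuot
    rw [dif_pos hdiv]
  set xfun : ℕ → ℝ := fun k => if h : 1 ≤ k ∧ k ≤ d then x ⟨k-1, by omega⟩ else 0 with hxfun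
  set ystar : ℕ → ℝ := fun i => xfun (collapseVar d s i) with hystar
  have hystar_in : ∀ k ∈ Finset.Icc 1 d, ∀ i ∈ Finset.Icc (qIdx s k) (qIdx s (k+1) - 1),
      ystar i = xfun k := by
    intro k hk i hi
    rw [hystar]
    rw [Finset.mem_Icc] at hi
    have hq1 := qIdx_pos s (k+1)
    have hcv := collapseVar_eq s d hk hi.1 (by omega)
    simp only [hcv]
  have hxfun_val : ∀ k, ∀ hk : k ∈ Finset.Icc 1 d, ∀ h : k - 1 < d, xfun k = x ⟨k-1, h⟩ := by
    intro k hk h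
    rw [Finset.mem_Icc] at hk
    have hkk : 1 ≤ k ∧ k ≤ d := by omega
    show (if h' : 1 ≤ k ∧ k ≤ d then x ⟨k-1, by omega⟩ else 0) = x ⟨k-1, h⟩
    rw [dif_pos hkk]
  have hystar_pole : ∀ i ∈ Finset.Icc 1 (2*N), c * ystar i + e ≠ 0 := by
    intro i hi
    rw [blocks_partition s d N hd hsum, Finset.mem_biUnion] at hi
    obtain ⟨k, hk, hik⟩ := hi
    have hkd : k - 1 < d := by
      rw [Finset.mem_Icc] at hk
      omega
    rw [hystar_in k hk i hik, hxfun_val k hk hkd]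
    exact hpole _
  have hEx : evalAt d x (fusedSpecht (2*N) d s (cellsCol N) (transposeFill T))
      = eval ystar Q := by
    rw [hfused]
    unfold evalAt
    rw [MvPolynomial.eval_rename]
    rfl
  set Bn : ℕ := ∑ k ∈ Finset.Icc 1 d,
      (((Finset.Icc (qIdx s k) (qIdx s (k+1) - 1)) ×ˢ
        (Finset.Icc (qIdx s k) (qIdx s (k+1) - 1))).filter (fun p => p.1 < p.2)).card
      with hBn
  set H : ℝ → ℝ := fun t =>
    eval (fun i => if 1 ≤ i ∧ i ≤ 2*N then phi a b c e (ystar i + t*(i:ℝ)) else 0) Q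
      * (∏ i ∈ Finset.Icc 1 (2*N), (c*(ystar i + t*(i:ℝ))+e) ^ (N-1))
      * (a*e-b*c) ^ Bn with hH
  set K : ℝ → ℝ := fun t =>
    (a*e-b*c) ^ (N*(N-1)) * eval (fun i => ystar i + t*(i:ℝ)) Q
      * ∏ k ∈ Finset.Icc 1 d, ∏ i ∈ Finset.Icc (qIdx s k) (qIdx s (k+1) - 1),
          (c*(ystar i + t*(i:ℝ))+e) ^ (s k - 1) with hK
  have hev1 : ∀ᶠ t in nhds (0:ℝ), ∀ i ∈ Finset.Icc 1 (2*N),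
      c*(ystar i + t*(i:ℝ))+e ≠ 0 := by
    rw [Finset.eventually_all]
    intro i hi
    have hcontinuous : ContinuousAt (fun t : ℝ => c*(ystar i + t*(i:ℝ))+e) 0 := by fun_prop
    have hne0 : c*(ystar i + 0*(i:ℝ))+e ≠ 0 := by
      simpa using hystar_pole i hi
    exact hcontinuous.eventually_ne hne0
  have hHK : ∀ᶠ t in nhdsWithin (0:ℝ) {(0:ℝ)}ᶜ, H t = K t := by
    filter_upwards [eventually_nhdsWithin_of_eventually_nhds hev1, self_mem_nhdsWithin]
      with t hpolet ht0
    have ht0' : (t:ℝ) ≠ 0 := ht0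
    have hVu : eval (fun i => ystar i + t*(i:ℝ)) (vandBlocks d s) ≠ 0 := by
      rw [eval_vandBlocks, Finset.prod_ne_zero_iff]
      intro k hk
      rw [Finset.prod_ne_zero_iff]
      intro p hp
      rw [Finset.mem_filter, Finset.mem_product] at hp
      have h1 := hystar_in k hk p.1 hp.1.1
      have h2 := hystar_in k hk p.2 hp.1.2
      have heq : (ystar p.2 + t*((p.2:ℕ):ℝ)) - (ystar p.1 + t*((p.1:ℕ):ℝ))
          = t * (((p.2:ℕ):ℝ) - ((p.1:ℕ):ℝ)) := by
        rw [h1, h2]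
        ring
      rw [heq]
      exact mul_ne_zero ht0'
        (sub_ne_zero.mpr (ne_of_gt (by exact_mod_cast hp.2)))
    have htr : eval (fun i => if 1 ≤ i ∧ i ≤ 2*N then phi a b c e (ystar i + t*(i:ℝ)) else 0) Q
        = eval (fun i => phi a b c e (ystar i + t*(i:ℝ))) Q := by
      apply evalQ_ext N d s _ hrange hsum Q hQ
      intro i hi
      rw [if_pos hi]
    rw [hH, hK]
    simp only []
    rw [htr]
    exact Q_cov N d s a b c e hdet _ hrange hreindex hsum Q hQ
      (fun i => ystar i + t*(i:ℝ)) (fun i hi => hpolet i hi) hVu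
  have hc1 : ContinuousAt (fun t => eval (fun i => if 1 ≤ i ∧ i ≤ 2*N
      then phi a b c e (ystar i + t*(i:ℝ)) else 0) Q) 0 := by
    apply continuousAt_evalPoly Q
      (fun i t => if 1 ≤ i ∧ i ≤ 2*N then phi a b c e (ystar i + t*(i:ℝ)) else 0) 0
    intro i
    by_cases hi : 1 ≤ i ∧ i ≤ 2*N
    · have hfun : (fun t : ℝ => if 1 ≤ i ∧ i ≤ 2*N then phi a b c e (ystar i + t*(i:ℝ)) else 0)
          = fun t : ℝ => (a*(ystar i + t*(i:ℝ))+b)/(c*(ystar i + t*(i:ℝ))+e) := by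
        funext t
        rw [if_pos hi]
        rfl
      rw [hfun]
      apply ContinuousAt.div (by fun_prop) (by fun_prop)
      simpa using hystar_pole i (Finset.mem_Icc.mpr hi)
    · simp only [if_neg hi]
      exact continuousAt_const
  have hc2 : ContinuousAt (fun t : ℝ => ∏ i ∈ Finset.Icc 1 (2*N),
      (c*(ystar i + t*(i:ℝ))+e) ^ (N-1)) 0 :=
    (continuous_finset_prod _ (fun i _ => by fun_prop)).continuousAt
  have hc3 : ContinuousAt (fun t : ℝ => ∏ k ∈ Finset.Icc 1 d,
      ∏ i ∈ Finset.Icc (qIdx s k) (qIdx s (k+1) - 1),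
        (c*(ystar i + t*(i:ℝ))+e) ^ (s k - 1)) 0 :=
    (continuous_finset_prod _ (fun k _ =>
      continuous_finset_prod _ (fun i _ => by fun_prop))).continuousAt
  have hc4 : ContinuousAt (fun t => eval (fun i => ystar i + t*(i:ℝ)) Q) 0 :=
    continuousAt_evalPoly Q (fun i t => ystar i + t*(i:ℝ)) 0 (fun i => by fun_prop)
  have hHc : ContinuousAt H 0 := by
    rw [hH]
    exact (hc1.mul hc2).mul continuousAt_const
  have hKc : ContinuousAt K 0 := by
    rw [hK]
    exact (continuousAt_const.mul hc4).mul hc3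
  have h00 : H 0 = K 0 :=
    tendsto_nhds_unique (hHc.tendsto.mono_left nhdsWithin_le_nhds)
      (Filter.Tendsto.congr' (Filter.EventuallyEq.symm hHK)
        (hKc.tendsto.mono_left nhdsWithin_le_nhds))
  have hH0 : H 0 = eval (fun i => if 1 ≤ i ∧ i ≤ 2*N then phi a b c e (ystar i) else 0) Q
      * (∏ i ∈ Finset.Icc 1 (2*N), (c*ystar i+e) ^ (N-1)) * (a*e-b*c) ^ Bn := by
    rw [hH]
    simp only [zero_mul, add_zero]
  have hK0 : K 0 = (a*e-b*c) ^ (N*(N-1)) * eval ystar Q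
      * ∏ k ∈ Finset.Icc 1 d, ∏ i ∈ Finset.Icc (qIdx s k) (qIdx s (k+1) - 1),
          (c*ystar i+e) ^ (s k - 1) := by
    rw [hK]
    simp only [zero_mul, add_zero]
  -- convert the index products to `Fin d` products
  have hPi1c : (∏ i ∈ Finset.Icc 1 (2*N), (c*ystar i+e) ^ (N-1))
      = ∏ i : Fin d, ((c * x i + e) ^ (N - 1)) ^ (s ((i:ℕ)+1)) := by
    rw [blocks_partition s d N hd hsum, Finset.prod_biUnion (blocks_disjoint s d)]
    have step : ∀ k ∈ Finset.Icc 1 d, (∏ i ∈ Finset.Icc (qIdx s k) (qIdx s (k+1) - 1),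
        (c*ystar i+e) ^ (N-1)) = ((c * xfun k + e) ^ (N-1)) ^ (s k) := by
      intro k hk
      rw [Finset.prod_congr rfl (fun i hi => by rw [hystar_in k hk i hi]),
        Finset.prod_const, block_card s (Finset.mem_Icc.mp hk).1]
    rw [Finset.prod_congr rfl step, Icc_prod_fin d (fun k => ((c * xfun k + e) ^ (N-1)) ^ (s k))]
    refine Finset.prod_congr rfl fun i _ => ?_
    have hmem : (i:ℕ)+1 ∈ Finset.Icc 1 d := Finset.mem_Icc.mpr ⟨by omega, by omega⟩
    rw [hxfun_val ((i:ℕ)+1) hmem (by omega)]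
    have hfin : (⟨(i:ℕ)+1-1, by omega⟩ : Fin d) = i := by
      apply Fin.ext
      simp
    rw [hfin]
  have hPi2c : (∏ k ∈ Finset.Icc 1 d, ∏ i ∈ Finset.Icc (qIdx s k) (qIdx s (k+1) - 1),
        (c*ystar i+e) ^ (s k - 1))
      = ∏ i : Fin d, ((c * x i + e) ^ (s ((i:ℕ)+1) - 1)) ^ (s ((i:ℕ)+1)) := by
    have step : ∀ k ∈ Finset.Icc 1 d, (∏ i ∈ Finset.Icc (qIdx s k) (qIdx s (k+1) - 1),
        (c*ystar i+e) ^ (s k - 1)) = ((c * xfun k + e) ^ (s k - 1)) ^ (s k) := by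
      intro k hk
      rw [Finset.prod_congr rfl (fun i hi => by rw [hystar_in k hk i hi]),
        Finset.prod_const, block_card s (Finset.mem_Icc.mp hk).1]
    rw [Finset.prod_congr rfl step,
      Icc_prod_fin d (fun k => ((c * xfun k + e) ^ (s k - 1)) ^ (s k))]
    refine Finset.prod_congr rfl fun i _ => ?_
    have hmem : (i:ℕ)+1 ∈ Finset.Icc 1 d := Finset.mem_Icc.mpr ⟨by omega, by omega⟩
    rw [hxfun_val ((i:ℕ)+1) hmem (by omega)]
    have hfin : (⟨(i:ℕ)+1-1, by omega⟩ : Fin d) = i := by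
      apply Fin.ext
      simp
    rw [hfin]
  have hExphi : evalAt d (fun i => (a * x i + b) / (c * x i + e))
      (fusedSpecht (2*N) d s (cellsCol N) (transposeFill T))
      = eval (fun i => if 1 ≤ i ∧ i ≤ 2*N then phi a b c e (ystar i) else 0) Q := by
    rw [hfused]
    unfold evalAt
    rw [MvPolynomial.eval_rename]
    apply evalQ_ext N d s _ hrange hsum Q hQ
    intro i hi
    rw [if_pos hi]
    have hi' : i ∈ Finset.Icc 1 (2*N) := Finset.mem_Icc.mpr hi
    rw [blocks_partition s d N hd hsum, Finset.mem_biUnion] at hi'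
    obtain ⟨k, hk, hik⟩ := hi'
    rw [Finset.mem_Icc] at hik
    have hq1 := qIdx_pos s (k+1)
    have hcv := collapseVar_eq s d hk hik.1 (by omega)
    have hkk := Finset.mem_Icc.mp hk
    have hkd : k - 1 < d := by omega
    have hy : ystar i = x ⟨k-1, hkd⟩ := by
      rw [hystar]
      simp only [hcv]
      exact hxfun_val k hk hkd
    simp only [Function.comp_apply, hcv]
    rw [dif_pos (show 1 ≤ k ∧ k ≤ d by omega), hy]
    rfl
  -- assemble
  unfold Ublock
  rw [hEx, hExphi]
  set E : ℝ := eval ystar Q with hE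
  set E' : ℝ := eval (fun i => if 1 ≤ i ∧ i ≤ 2*N then phi a b c e (ystar i) else 0) Q with hE'
  have hstar : E' * (∏ i : Fin d, ((c * x i + e) ^ (N - 1)) ^ (s ((i:ℕ)+1)))
        * (a*e-b*c) ^ Bn
      = (a*e-b*c) ^ (N*(N-1)) * E
        * ∏ i : Fin d, ((c * x i + e) ^ (s ((i:ℕ)+1) - 1)) ^ (s ((i:ℕ)+1)) := by
    rw [hH0, hK0, hPi1c, hPi2c] at h00
    exact h00
  have hPi1ne : (∏ i : Fin d, ((c * x i + e) ^ (N - 1)) ^ (s ((i:ℕ)+1))) ≠ 0 := by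
    rw [Finset.prod_ne_zero_iff]
    exact fun i _ => pow_ne_zero _ (pow_ne_zero _ (hpole i))
  by_cases hE0 : E = 0
  · have hE'0 : E' = 0 := by
      rw [hE0, mul_zero, zero_mul] at hstar
      rcases mul_eq_zero.mp hstar with h | h
      · rcases mul_eq_zero.mp h with h' | h'
        · exact h'
        · exact absurd h' hPi1ne
      · exact absurd h (pow_ne_zero _ hΔne)
    rw [hE0, hE'0, mul_zero, mul_zero, mul_zero]
  · have hBnr : (Bn:ℝ) = ∑ i : Fin d,
        ((s ((i:ℕ)+1) : ℝ) * ((s ((i:ℕ)+1) : ℝ) - 1))/2 := by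
      rw [hBn]
      push_cast
      rw [Icc_sum_fin d (fun k => ((((Finset.Icc (qIdx s k) (qIdx s (k+1) - 1)) ×ˢ
        (Finset.Icc (qIdx s k) (qIdx s (k+1) - 1))).filter
          (fun p => p.1 < p.2)).card : ℝ))]
      refine Finset.sum_congr rfl fun i _ => ?_
      have hmem : (i:ℕ)+1 ∈ Finset.Icc 1 d := Finset.mem_Icc.mpr ⟨by omega, by omega⟩
      have h2 := two_mul_card_pairs (Finset.Icc (qIdx s ((i:ℕ)+1)) (qIdx s ((i:ℕ)+1+1) - 1))
      rw [block_card s (by omega : 1 ≤ (i:ℕ)+1)] at h2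
      have hs1 : 1 ≤ s ((i:ℕ)+1) := hpos _ hmem
      have hcast := congrArg (Nat.cast : ℕ → ℝ) h2
      push_cast [Nat.cast_sub hs1] at hcast
      linarith
    have hdag := dagger N d hN hd s hpos hsum a b c e hdet x hx hpole hord Bn hBnr
    have hup : (Finset.univ : Finset (Fin d × Fin d)) = Finset.univ ×ˢ Finset.univ :=
      Finset.univ_product_univ.symm
    rw [hup]
    apply mul_right_cancel₀ (mul_ne_zero hPi1ne (pow_ne_zero Bn hΔne))
    linear_combination (∏ p ∈ (Finset.univ ×ˢ Finset.univ).filter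
        (fun p : Fin d × Fin d => p.1 < p.2),
        ((a * x p.2 + b) / (c * x p.2 + e) - (a * x p.1 + b) / (c * x p.1 + e)) ^
          (-(((s ((p.1:ℕ)+1) * s ((p.2:ℕ)+1) : ℕ) : ℝ)) / 2)) * hstar + E * hdag
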